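/- arXiv:2510.12431 — 8 statements merged into one kernel-verified Lean document; each statement's English description precedes it below -/
import Mathlib

section
/- For every real q with 0 < q < 1 and every real t, the infinite product ∏_{m=1}^∞ (1−q^m)^2 / ((1−q^m)^2 + t^2 q^m) converges, the series ∑_{m=1}^∞ (−1)^{m−1} q^{m(m−1)/2} (1+q^m) (1−q^m)^2/((1−q^m)^2 + t^2 q^m) converges, and the two are equal. -/
open scoped BigOperators
open Finset Filter
open scoped Topology

namespace Stmt1Aux
variable {q t : ℝ}

noncomputable def phi (q : ℝ) (M : ℕ) : ℝ := ∏ i ∈ range M, (1 - q ^ (i + 1))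

noncomputable def aa (q t : ℝ) (i : ℕ) : ℝ :=
  (1 - q ^ (i + 1)) ^ 2 / ((1 - q ^ (i + 1)) ^ 2 + t ^ 2 * q ^ (i + 1))

noncomputable def vv (q : ℝ) (i : ℕ) : ℝ := q ^ (i + 1) + (q ^ (i + 1))⁻¹

noncomputable def ee (q : ℝ) (i j : ℕ) : ℝ :=
  (1 - q ^ (i + 1)) ^ 2 * q ^ (j + 1) /
    ((q ^ (j + 1) - q ^ (i + 1)) * (1 - q ^ (i + 1) * q ^ (j + 1)))

noncomputable def gg (q t : ℝ) (j : ℕ) : ℝ :=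
  (-1 : ℝ) ^ j * q ^ ((j + 1) * j / 2) * (1 + q ^ (j + 1)) * aa q t j

noncomputable def rr (q : ℝ) (j N : ℕ) : ℝ :=
  (phi q N) ^ 2 / (phi q (N + j + 1) * phi q (N - j - 1))

lemma qp01 (hq0 : 0 < q) (hq1 : q < 1) {k : ℕ} (hk : k ≠ 0) : 0 < q ^ k ∧ q ^ k < 1 :=
  ⟨pow_pos hq0 _, pow_lt_one₀ hq0.le hq1 hk⟩

lemma D_pos (hq0 : 0 < q) (hq1 : q < 1) (i : ℕ) :
    0 < (1 - q ^ (i + 1)) ^ 2 + t ^ 2 * q ^ (i + 1) := by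
  obtain ⟨h2, h1⟩ := qp01 hq0 hq1 (by omega : i + 1 ≠ 0)
  nlinarith [sq_nonneg t]

lemma aa_pos (hq0 : 0 < q) (hq1 : q < 1) (i : ℕ) : 0 < aa q t i := by
  obtain ⟨h2, h1⟩ := qp01 hq0 hq1 (by omega : i + 1 ≠ 0)
  exact div_pos (by nlinarith) (D_pos hq0 hq1 i)

lemma aa_le_one (hq0 : 0 < q) (hq1 : q < 1) (i : ℕ) : aa q t i ≤ 1 := by
  obtain ⟨h2, h1⟩ := qp01 hq0 hq1 (by omega : i + 1 ≠ 0)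
  exact div_le_one_of_le₀ (by nlinarith [sq_nonneg t]) (D_pos hq0 hq1 i).le

lemma phi_pos (hq0 : 0 < q) (hq1 : q < 1) (M : ℕ) : 0 < phi q M :=
  Finset.prod_pos fun i _ => by
    have := (qp01 hq0 hq1 (by omega : i + 1 ≠ 0)).2; linarith

lemma phi_add (c k : ℕ) : phi q (c + k) = phi q c * ∏ i ∈ range k, (1 - q ^ (c + i + 1)) := by
  rw [phi, Finset.prod_range_add]
  simp [phi, add_assoc, add_comm, add_left_comm]

lemma phi_succ (M : ℕ) : phi q (M + 1) = phi q M * (1 - q ^ (M + 1)) := by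
  rw [phi, Finset.prod_range_succ, phi]

lemma one_sub_sum_le_prod (x : ℕ → ℝ) (hx0 : ∀ i, 0 ≤ x i) (hx1 : ∀ i, x i ≤ 1) (k : ℕ) :
    1 - ∑ i ∈ range k, x i ≤ ∏ i ∈ range k, (1 - x i) := by
  induction k with
  | zero => simp
  | succ k ih =>
      rw [Finset.prod_range_succ, Finset.sum_range_succ]
      have hp : 0 ≤ ∏ i ∈ range k, (1 - x i) :=
        Finset.prod_nonneg fun i _ => by linarith [hx1 i]
      have hS : 0 ≤ ∑ i ∈ range k, x i := Finset.sum_nonneg fun i _ => hx0 i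
      nlinarith [hx0 k, hx1 k, ih]

lemma W (hq0 : 0 < q) (hq1 : q < 1) (c k : ℕ) :
    1 - q ^ (c + 1) / (1 - q) ≤ ∏ i ∈ range k, (1 - q ^ (c + i + 1)) := by
  have h1 : 1 - ∑ i ∈ range k, q ^ (c + i + 1) ≤ ∏ i ∈ range k, (1 - q ^ (c + i + 1)) :=
    one_sub_sum_le_prod _ (fun i => (pow_pos hq0 _).le)
      (fun i => ((qp01 hq0 hq1 (by omega : c + i + 1 ≠ 0)).2).le) k
  have h2 : ∑ i ∈ range k, q ^ (c + i + 1) ≤ q ^ (c + 1) / (1 - q) := by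
    have : ∀ i ∈ range k, q ^ (c + i + 1) = q ^ (c + 1) * q ^ i := fun i _ => by ring
    rw [Finset.sum_congr rfl this, ← Finset.mul_sum]
    have hg : ∑ i ∈ range k, q ^ i ≤ 1 / (1 - q) := by
      rw [geom_sum_eq (ne_of_lt hq1)]
      have hk := pow_pos hq0 k
      have hk1 : q ^ k ≤ 1 := pow_le_one₀ hq0.le hq1.le
      have h3 : (q ^ k - 1) / (q - 1) = (1 - q ^ k) / (1 - q) := by
        rw [div_eq_div_iff (by linarith) (by linarith)]; ring
      rw [h3, div_le_div_iff₀ (by linarith) (by linarith)]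
      nlinarith
    calc q ^ (c + 1) * ∑ i ∈ range k, q ^ i ≤ q ^ (c + 1) * (1 / (1 - q)) :=
          mul_le_mul_of_nonneg_left hg (pow_pos hq0 _).le
      _ = q ^ (c + 1) / (1 - q) := by ring
  linarith

lemma prod_le_one' (hq0 : 0 < q) (hq1 : q < 1) (c k : ℕ) :
    ∏ i ∈ range k, (1 - q ^ (c + i + 1)) ≤ 1 :=
  Finset.prod_le_one
    (fun i _ => by have := (qp01 hq0 hq1 (by omega : c + i + 1 ≠ 0)).2; linarith)
    (fun i _ => by have := pow_pos hq0 (c + i + 1); linarith)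

lemma pow_ne (hq0 : 0 < q) (hq1 : q < 1) {i j : ℕ} (h : i ≠ j) :
    q ^ (i + 1) ≠ q ^ (j + 1) := by
  rcases Nat.lt_or_ge i j with hij | hij
  · exact ne_of_gt (pow_lt_pow_right_of_lt_one₀ hq0 hq1 (by omega))
  · exact ne_of_lt (pow_lt_pow_right_of_lt_one₀ hq0 hq1 (by omega))

lemma gen_sub {X Y : ℝ} (hX : X ≠ 0) (hY : Y ≠ 0) :
    (Y + Y⁻¹) - (X + X⁻¹) = (Y - X) * (X * Y - 1) / (X * Y) := by
  field_simp
  ring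

lemma gen_factor {X Y t : ℝ} (hX0 : 0 < X) (hX1 : X < 1) (hY0 : 0 < Y) (hY1 : Y < 1)
    (hne : X ≠ Y) :
    ((Y + Y⁻¹) - (X + X⁻¹))⁻¹ * ((2 - t ^ 2) - (X + X⁻¹)) *
      ((1 - X) ^ 2 / ((1 - X) ^ 2 + t ^ 2 * X)) =
    (1 - X) ^ 2 * Y / ((Y - X) * (1 - X * Y)) := by
  have hXY : X * Y < 1 := by nlinarith
  have hD : 0 < (1 - X) ^ 2 + t ^ 2 * X := by nlinarith [sq_nonneg t]
  have hsub := gen_sub (X := X) (Y := Y) hX0.ne' hY0.ne'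
  have hYX : Y - X ≠ 0 := sub_ne_zero_of_ne (Ne.symm hne)
  rw [hsub]
  have hXYne : X * Y - 1 ≠ 0 := by nlinarith
  have hXYne' : 1 - X * Y ≠ 0 := by nlinarith
  rw [inv_div, eq_div_iff (mul_ne_zero hYX hXYne')]
  field_simp
  rw [div_eq_iff (ne_of_gt (by linarith))]; ring

lemma vv_ne (hq0 : 0 < q) (hq1 : q < 1) {i j : ℕ} (h : i ≠ j) : vv q j - vv q i ≠ 0 := by
  obtain ⟨hX0, hX1⟩ := qp01 hq0 hq1 (by omega : i + 1 ≠ 0)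
  obtain ⟨hY0, hY1⟩ := qp01 hq0 hq1 (by omega : j + 1 ≠ 0)
  have hne := pow_ne hq0 hq1 h
  rw [vv, vv, gen_sub hX0.ne' hY0.ne']
  have hYX : q ^ (j + 1) - q ^ (i + 1) ≠ 0 := sub_ne_zero_of_ne (Ne.symm hne)
  have hXY : q ^ (i + 1) * q ^ (j + 1) < 1 := by nlinarith
  exact div_ne_zero (mul_ne_zero hYX (by nlinarith)) (by positivity)

lemma vv_injOn (hq0 : 0 < q) (hq1 : q < 1) (s : Set ℕ) : Set.InjOn (vv q) s := by
  intro i _ j _ hij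
  by_contra h
  exact vv_ne hq0 hq1 (Ne.symm h) (by rw [hij, sub_self])

lemma factor_eq (hq0 : 0 < q) (hq1 : q < 1) {i j : ℕ} (h : i ≠ j) :
    (vv q j - vv q i)⁻¹ * ((2 - t ^ 2) - vv q i) * aa q t i = ee q i j := by
  obtain ⟨hX0, hX1⟩ := qp01 hq0 hq1 (by omega : i + 1 ≠ 0)
  obtain ⟨hY0, hY1⟩ := qp01 hq0 hq1 (by omega : j + 1 ≠ 0)
  rw [vv, vv, ee, aa]
  exact gen_factor hX0 hX1 hY0 hY1 (pow_ne hq0 hq1 h)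

lemma lag_sum (hq0 : 0 < q) (hq1 : q < 1) (u : ℝ) {N : ℕ} (hN : 0 < N) :
    ∑ j ∈ range N, ∏ i ∈ (range N).erase j, ((vv q j - vv q i)⁻¹ * (u - vv q i)) = 1 := by
  have hinj : Set.InjOn (vv q) (range N : Finset ℕ) := vv_injOn hq0 hq1 _
  have hne : (range N).Nonempty := nonempty_range_iff.mpr hN.ne'
  have hsum := Lagrange.sum_basis hinj hne
  have := congrArg (Polynomial.eval u) hsum
  rw [Polynomial.eval_finset_sum, Polynomial.eval_one] at this
  rw [← this]
  refine Finset.sum_congr rfl fun j hj => ?_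
  rw [Lagrange.basis, Polynomial.eval_prod]
  refine Finset.prod_congr rfl fun i hi => ?_
  rw [Lagrange.basisDivisor]
  simp [mul_comm]

lemma sum_range_sub (j : ℕ) : ∑ i ∈ range j, (j - i) = (j + 1) * j / 2 := by
  have h := Finset.sum_range_reflect (fun i => j - i) j
  have h2 : ∀ i ∈ range j, j - (j - 1 - i) = i + 1 := fun i hi => by
    have := Finset.mem_range.mp hi; omega
  rw [Finset.sum_congr rfl h2] at h
  rw [← h]
  have : ∑ i ∈ range j, (i + 1) = (∑ i ∈ range j, i) + j := by
    rw [Finset.sum_add_distrib, Finset.sum_const, card_range, smul_eq_mul, mul_one]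
  rw [this, Finset.sum_range_id]
  have hm : (j + 1) * j = j * (j - 1) + 2 * j := by
    cases j with
    | zero => rfl
    | succ k => simp [Nat.succ_sub_one]; ring
  omega

lemma gen_A {X r Z C : ℝ} (hX : X ≠ 0) (hr : 1 - r ≠ 0) (hZ : 1 - Z ≠ 0) :
    C * (X * r) / ((X * r - X) * (1 - Z)) = ((-1 : ℝ) * (r * C)) / ((1 - r) * (1 - Z)) := by
  have hd : (X * r - X) * (1 - Z) ≠ 0 := by
    refine mul_ne_zero ?_ hZ
    have : X * r - X = -(X * (1 - r)) := by ring
    rw [this, neg_ne_zero]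
    exact mul_ne_zero hX hr
  rw [div_eq_div_iff hd (mul_ne_zero hr hZ)]
  ring

lemma Aprod (hq0 : 0 < q) (hq1 : q < 1) (j : ℕ) :
    ∏ i ∈ range j, ee q i j =
      (-1 : ℝ) ^ j * q ^ ((j + 1) * j / 2) * phi q j * phi q (j + 1) / phi q (2 * j + 1) := by
  have hfac : ∀ i ∈ range j, ee q i j =
      ((-1 : ℝ) * (q ^ (j - i) * (1 - q ^ (i + 1)) ^ 2)) /
        ((1 - q ^ (j - i)) * (1 - q ^ (j + 1 + i + 1))) := by
    intro i hi
    have hij := Finset.mem_range.mp hi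
    obtain ⟨hX0, hX1⟩ := qp01 hq0 hq1 (by omega : i + 1 ≠ 0)
    obtain ⟨hr0, hr1⟩ := qp01 hq0 hq1 (show j - i ≠ 0 by omega)
    obtain ⟨hZ0, hZ1⟩ := qp01 hq0 hq1 (by omega : j + 1 + i + 1 ≠ 0)
    have hY : q ^ (j + 1) = q ^ (i + 1) * q ^ (j - i) := by
      rw [← pow_add]; congr 1; omega
    have hZ : q ^ (i + 1) * q ^ (j + 1) = q ^ (j + 1 + i + 1) := by
      rw [← pow_add]; congr 1; omega
    rw [ee, hZ, hY]
    exact gen_A hX0.ne' (by linarith) (by linarith)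
  rw [Finset.prod_congr rfl hfac, Finset.prod_div_distrib, Finset.prod_mul_distrib,
    Finset.prod_mul_distrib, Finset.prod_const, Finset.prod_pow_eq_pow_sum, sum_range_sub,
    Finset.prod_mul_distrib, Finset.prod_pow, card_range]
  have hd1 : ∏ i ∈ range j, (1 - q ^ (j - i)) = phi q j := by
    rw [phi, ← Finset.prod_range_reflect]
    refine Finset.prod_congr rfl fun i hi => ?_
    have := Finset.mem_range.mp hi
    rw [show j - (j - 1 - i) = i + 1 by omega]
  have hd2 : phi q (2 * j + 1) = phi q (j + 1) * ∏ i ∈ range j, (1 - q ^ (j + 1 + i + 1)) := by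
    have := phi_add (q := q) (j + 1) j
    rw [show j + 1 + j = 2 * j + 1 by omega] at this
    exact this
  have hphij := phi_pos hq0 hq1 j
  have hphij1 := phi_pos hq0 hq1 (j + 1)
  have hphi2j := phi_pos hq0 hq1 (2 * j + 1)
  have hD2pos : 0 < ∏ i ∈ range j, (1 - q ^ (j + 1 + i + 1)) :=
    Finset.prod_pos fun i _ => by
      have := (qp01 hq0 hq1 (by omega : j + 1 + i + 1 ≠ 0)).2; linarith
  have hD2 : ∏ i ∈ range j, (1 - q ^ (j + 1 + i + 1)) = phi q (2 * j + 1) / phi q (j + 1) := by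
    rw [eq_div_iff hphij1.ne']
    linarith [hd2]
  have hphi_def : ∀ M : ℕ, (∏ i ∈ range M, (1 - q ^ (i + 1))) = phi q M := fun M => rfl
  rw [hd1, hD2, hphi_def]
  rw [div_eq_div_iff (by positivity) (phi_pos hq0 hq1 (2 * j + 1)).ne']
  field_simp

lemma Bprod (hq0 : 0 < q) (hq1 : q < 1) {j N : ℕ} (hj : j < N) :
    ∏ i ∈ Ico (j + 1) N, ee q i j =
      (phi q N) ^ 2 * phi q (2 * j + 2) /
        ((phi q (j + 1)) ^ 2 * phi q (N - j - 1) * phi q (N + j + 1)) := by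
  obtain ⟨M, rfl⟩ : ∃ M, N = j + 1 + M := ⟨N - j - 1, by omega⟩
  rw [Finset.prod_Ico_eq_prod_range]
  have hfac : ∀ k ∈ range (j + 1 + M - (j + 1)), ee q (j + 1 + k) j =
      (1 - q ^ (j + 1 + k + 1)) ^ 2 / ((1 - q ^ (k + 1)) * (1 - q ^ (2 * j + 2 + k + 1))) := by
    intro k hk
    obtain ⟨hr0, hr1⟩ := qp01 hq0 hq1 (by omega : k + 1 ≠ 0)
    obtain ⟨hZ0, hZ1⟩ := qp01 hq0 hq1 (by omega : 2 * j + 2 + k + 1 ≠ 0)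
    obtain ⟨hY0, hY1⟩ := qp01 hq0 hq1 (by omega : j + 1 ≠ 0)
    have h1 : q ^ (j + 1 + k + 1) = q ^ (j + 1) * q ^ (k + 1) := by
      rw [← pow_add, show j + 1 + (k + 1) = j + 1 + k + 1 from rfl]
    have h2 : q ^ (j + 1 + k + 1) * q ^ (j + 1) = q ^ (2 * j + 2 + k + 1) := by
      rw [← pow_add]; congr 1; omega
    rw [ee, h2]
    rw [show q ^ (j + 1) - q ^ (j + 1 + k + 1) = q ^ (j + 1) * (1 - q ^ (k + 1)) by
      rw [h1]; ring]
    have h3 : (0:ℝ) < 1 - q ^ (k + 1) := by linarith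
    have h4 : (0:ℝ) < 1 - q ^ (2 * j + 2 + k + 1) := by linarith
    rw [div_eq_div_iff (ne_of_gt (mul_pos (mul_pos hY0 h3) h4)) (ne_of_gt (mul_pos h3 h4))]
    ring
  rw [Finset.prod_congr rfl hfac, Finset.prod_div_distrib, Finset.prod_mul_distrib,
    Finset.prod_pow]
  have e1 : phi q (j + 1 + M) = phi q (j + 1) * ∏ k ∈ range M, (1 - q ^ (j + 1 + k + 1)) :=
    phi_add _ _
  have e2 : phi q M = ∏ k ∈ range M, (1 - q ^ (k + 1)) := rfl
  have e3 : phi q (2 * j + 2 + M) =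
      phi q (2 * j + 2) * ∏ k ∈ range M, (1 - q ^ (2 * j + 2 + k + 1)) := phi_add _ _
  rw [show j + 1 + M - (j + 1) = M by omega]
  rw [show j + 1 + M - j - 1 = M by omega]
  rw [show j + 1 + M + j + 1 = 2 * j + 2 + M by omega]
  have p1 := phi_pos hq0 hq1 (j + 1)
  have p2 := phi_pos hq0 hq1 M
  have p3 := phi_pos hq0 hq1 (2 * j + 2)
  have p4 := phi_pos hq0 hq1 (j + 1 + M)
  have p5 := phi_pos hq0 hq1 (2 * j + 2 + M)
  have hprod1 : ∏ k ∈ range M, (1 - q ^ (j + 1 + k + 1)) =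
      phi q (j + 1 + M) / phi q (j + 1) := by
    rw [eq_div_iff p1.ne']; linarith [e1]
  have hprod3 : ∏ k ∈ range M, (1 - q ^ (2 * j + 2 + k + 1)) =
      phi q (2 * j + 2 + M) / phi q (2 * j + 2) := by
    rw [eq_div_iff p3.ne']; linarith [e3]
  rw [hprod1, ← e2, hprod3]
  rw [div_eq_div_iff (by positivity) (by positivity)]
  field_simp

lemma cprod (hq0 : 0 < q) (hq1 : q < 1) {j N : ℕ} (hj : j < N) :
    ∏ i ∈ (range N).erase j, ee q i j =
      (-1 : ℝ) ^ j * q ^ ((j + 1) * j / 2) * (1 + q ^ (j + 1)) *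
        ((phi q N) ^ 2 / (phi q (N + j + 1) * phi q (N - j - 1))) := by
  have hsplit : (range N).erase j = range j ∪ Ico (j + 1) N := by
    ext x
    simp only [Finset.mem_erase, Finset.mem_range, Finset.mem_union, Finset.mem_Ico]
    omega
  have hdisj : Disjoint (range j) (Ico (j + 1) N) := by
    rw [Finset.disjoint_left]
    intro x hx hx'
    simp only [Finset.mem_range] at hx
    simp only [Finset.mem_Ico] at hx'
    omega
  rw [hsplit, Finset.prod_union hdisj, Aprod hq0 hq1 j, Bprod hq0 hq1 hj]
  have p1 := phi_pos hq0 hq1 (j + 1)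
  have p2 := phi_pos hq0 hq1 j
  have p3 := phi_pos hq0 hq1 (2 * j + 1)
  have p4 := phi_pos hq0 hq1 (2 * j + 2)
  have p5 := phi_pos hq0 hq1 N
  have p6 := phi_pos hq0 hq1 (N - j - 1)
  have p7 := phi_pos hq0 hq1 (N + j + 1)
  have e1 : phi q (2 * j + 2) = phi q (2 * j + 1) * (1 - q ^ (2 * j + 2)) := by
    have := phi_succ (q := q) (2 * j + 1)
    rw [show 2 * j + 1 + 1 = 2 * j + 2 by omega] at this
    exact this
  have e2 : phi q (j + 1) = phi q j * (1 - q ^ (j + 1)) := phi_succ j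
  have e3 : (1 : ℝ) - q ^ (2 * j + 2) = (1 - q ^ (j + 1)) * (1 + q ^ (j + 1)) := by
    rw [show 2 * j + 2 = (j + 1) + (j + 1) by omega, pow_add]
    ring
  obtain ⟨hq10, hq11⟩ := qp01 hq0 hq1 (by omega : j + 1 ≠ 0)
  have hne : (1:ℝ) - q ^ (j + 1) ≠ 0 := by linarith
  rw [e1, e3, e2]
  field_simp

-- the finite key identity
lemma key (hq0 : 0 < q) (hq1 : q < 1) {N : ℕ} (hN : 0 < N) :
    ∏ i ∈ range N, aa q t i = ∑ j ∈ range N, gg q t j * rr q j N := by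
  have hls := lag_sum hq0 hq1 (2 - t ^ 2) hN
  calc ∏ i ∈ range N, aa q t i
      = (∑ j ∈ range N, ∏ i ∈ (range N).erase j,
          ((vv q j - vv q i)⁻¹ * ((2 - t ^ 2) - vv q i))) * ∏ i ∈ range N, aa q t i := by
        rw [hls, one_mul]
    _ = ∑ j ∈ range N, (∏ i ∈ (range N).erase j,
          ((vv q j - vv q i)⁻¹ * ((2 - t ^ 2) - vv q i))) * ∏ i ∈ range N, aa q t i :=
        Finset.sum_mul _ _ _
    _ = ∑ j ∈ range N, gg q t j * rr q j N := by
        refine Finset.sum_congr rfl fun j hj => ?_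
        have hjN := Finset.mem_range.mp hj
        rw [← Finset.prod_erase_mul (range N) (aa q t) hj, ← mul_assoc,
          ← Finset.prod_mul_distrib]
        have hee : ∀ i ∈ (range N).erase j,
            (vv q j - vv q i)⁻¹ * ((2 - t ^ 2) - vv q i) * aa q t i = ee q i j :=
          fun i hi => factor_eq hq0 hq1 (Finset.ne_of_mem_erase hi)
        rw [Finset.prod_congr rfl hee, cprod hq0 hq1 hjN, gg, rr]
        ring


lemma exp_ge (j : ℕ) : j ≤ (j + 1) * j / 2 := by
  rw [Nat.le_div_iff_mul_le (by norm_num : 0 < 2)]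
  cases j with
  | zero => simp
  | succ k =>
      have : 2 ≤ k + 1 + 1 := by omega
      calc (k + 1) * 2 = 2 * (k + 1) := by ring
        _ ≤ (k + 1 + 1) * (k + 1) := Nat.mul_le_mul_right (k + 1) this

lemma abs_gg_le (hq0 : 0 < q) (hq1 : q < 1) (j : ℕ) : |gg q t j| ≤ 2 * q ^ j := by
  have h0 := aa_pos (t := t) hq0 hq1 j
  have h1 := aa_le_one (t := t) hq0 hq1 j
  obtain ⟨h2, h3⟩ := qp01 hq0 hq1 (by omega : j + 1 ≠ 0)
  have h4 : q ^ ((j + 1) * j / 2) ≤ q ^ j := pow_le_pow_of_le_one hq0.le hq1.le (exp_ge j)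
  have h5 : 0 < q ^ ((j + 1) * j / 2) := pow_pos hq0 _
  have h6 : 0 < q ^ j := pow_pos hq0 _
  rw [gg, abs_mul, abs_mul, abs_mul, abs_pow, abs_neg, abs_one, one_pow, one_mul,
    abs_of_pos h5, abs_of_pos (by linarith : (0:ℝ) < 1 + q ^ (j + 1)), abs_of_pos h0]
  have s1 : q ^ ((j + 1) * j / 2) * (1 + q ^ (j + 1)) * aa q t j ≤
      q ^ ((j + 1) * j / 2) * (1 + q ^ (j + 1)) := by
    nlinarith [mul_pos h5 (show (0:ℝ) < 1 + q ^ (j + 1) by linarith)]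
  have s2 : q ^ ((j + 1) * j / 2) * (1 + q ^ (j + 1)) ≤ 2 * q ^ j := by nlinarith
  linarith

lemma summable_gg_abs (hq0 : 0 < q) (hq1 : q < 1) : Summable (fun j => |gg q t j|) :=
  Summable.of_nonneg_of_le (fun j => abs_nonneg _) (abs_gg_le hq0 hq1)
    ((summable_geometric_of_lt_one hq0.le hq1).mul_left 2)

lemma multipliable_aa (hq0 : 0 < q) (hq1 : q < 1) : Multipliable (fun n => aa q t n) := by
  refine Real.multipliable_of_summable_log (fun n => aa_pos hq0 hq1 n) ?_
  have hb : ∀ n : ℕ, |Real.log (aa q t n)| ≤ (t ^ 2 * q / (1 - q) ^ 2) * q ^ n := by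
    intro n
    have h0 := aa_pos (t := t) hq0 hq1 n
    have h1 := aa_le_one (t := t) hq0 hq1 n
    obtain ⟨h2, h3⟩ := qp01 hq0 hq1 (by omega : n + 1 ≠ 0)
    have hD := D_pos (t := t) hq0 hq1 n
    have habs : |Real.log (aa q t n)| = Real.log ((aa q t n)⁻¹) := by
      rw [Real.log_inv, abs_of_nonpos (Real.log_nonpos h0.le h1)]
    have hle : Real.log ((aa q t n)⁻¹) ≤ (aa q t n)⁻¹ - 1 :=
      Real.log_le_sub_one_of_pos (inv_pos.mpr h0)
    have hinv : (aa q t n)⁻¹ - 1 = t ^ 2 * q ^ (n + 1) / (1 - q ^ (n + 1)) ^ 2 := by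
      rw [aa, inv_div]
      rw [div_sub_one (by nlinarith : (1 - q ^ (n + 1)) ^ 2 ≠ 0)]
      congr 1
      ring
    have hC : (1 - q) ^ 2 ≤ (1 - q ^ (n + 1)) ^ 2 := by
      have : q ^ (n + 1) ≤ q := by
        calc q ^ (n + 1) ≤ q ^ 1 := pow_le_pow_of_le_one hq0.le hq1.le (by omega)
          _ = q := pow_one q
      nlinarith
    have hfin : t ^ 2 * q ^ (n + 1) / (1 - q ^ (n + 1)) ^ 2 ≤
        (t ^ 2 * q / (1 - q) ^ 2) * q ^ n := by
      have hq2 : (0:ℝ) < (1 - q) ^ 2 := by nlinarith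
      have := div_le_div_of_nonneg_left (by positivity : (0:ℝ) ≤ t ^ 2 * q ^ (n + 1)) hq2 hC
      calc t ^ 2 * q ^ (n + 1) / (1 - q ^ (n + 1)) ^ 2
          ≤ t ^ 2 * q ^ (n + 1) / (1 - q) ^ 2 := this
        _ = (t ^ 2 * q / (1 - q) ^ 2) * q ^ n := by rw [pow_succ]; ring
    rw [habs]
    calc Real.log ((aa q t n)⁻¹) ≤ (aa q t n)⁻¹ - 1 := hle
      _ = t ^ 2 * q ^ (n + 1) / (1 - q ^ (n + 1)) ^ 2 := hinv
      _ ≤ (t ^ 2 * q / (1 - q) ^ 2) * q ^ n := hfin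
  exact Summable.of_abs (Summable.of_nonneg_of_le (fun n => abs_nonneg _) hb
    ((summable_geometric_of_lt_one hq0.le hq1).mul_left _))

lemma rr_eq (hq0 : 0 < q) (hq1 : q < 1) {j N : ℕ} (hjN : j < N) :
    rr q j N = (∏ i ∈ range (j + 1), (1 - q ^ (N - j - 1 + i + 1))) /
      (∏ i ∈ range (j + 1), (1 - q ^ (N + i + 1))) := by
  obtain ⟨M, rfl⟩ : ∃ M, N = M + (j + 1) := ⟨N - j - 1, by omega⟩
  have e1 := phi_add (q := q) M (j + 1)
  have e2 := phi_add (q := q) (M + (j + 1)) (j + 1)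
  have pA := phi_pos hq0 hq1 M
  have pW1 : 0 < ∏ i ∈ range (j + 1), (1 - q ^ (M + i + 1)) :=
    Finset.prod_pos fun i _ => by
      have := (qp01 hq0 hq1 (by omega : M + i + 1 ≠ 0)).2; linarith
  have pW2 : 0 < ∏ i ∈ range (j + 1), (1 - q ^ (M + (j + 1) + i + 1)) :=
    Finset.prod_pos fun i _ => by
      have := (qp01 hq0 hq1 (by omega : M + (j + 1) + i + 1 ≠ 0)).2; linarith
  rw [rr, show M + (j + 1) - j - 1 = M by omega,
    show M + (j + 1) + j + 1 = M + (j + 1) + (j + 1) by omega, e2, e1]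
  field_simp

lemma tendsto_one_sub (hq0 : 0 < q) (hq1 : q < 1) (c : ℕ) :
    Tendsto (fun N : ℕ => 1 - q ^ (N - c + 1) / (1 - q)) atTop (𝓝 1) := by
  have h0 : Tendsto (fun m : ℕ => q ^ m) atTop (𝓝 (0 : ℝ)) :=
    tendsto_pow_atTop_nhds_zero_of_lt_one hq0.le hq1
  have h1 : Tendsto (fun N : ℕ => q ^ (N - c + 1)) atTop (𝓝 (0 : ℝ)) :=
    h0.comp ((tendsto_add_atTop_nat 1).comp (tendsto_sub_atTop_nat c))
  have h2 := h1.div_const (1 - q)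
  have h3 := (tendsto_const_nhds (x := (1 : ℝ)) (f := (atTop : Filter ℕ))).sub h2
  simpa using h3

lemma W2_lb (hq0 : 0 < q) (hq1 : q < 1) (j N : ℕ) :
    1 - q ^ (N + 1) / (1 - q) ≤ ∏ i ∈ range (j + 1), (1 - q ^ (N + i + 1)) := W hq0 hq1 N _

lemma W1_lb (hq0 : 0 < q) (hq1 : q < 1) (j N : ℕ) :
    1 - q ^ (N - j - 1 + 1) / (1 - q) ≤ ∏ i ∈ range (j + 1), (1 - q ^ (N - j - 1 + i + 1)) :=
  W hq0 hq1 _ _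

lemma rr_tendsto (hq0 : 0 < q) (hq1 : q < 1) (j : ℕ) :
    Tendsto (fun N => rr q j N) atTop (𝓝 1) := by
  have hW1 : Tendsto (fun N : ℕ => ∏ i ∈ range (j + 1), (1 - q ^ (N - j - 1 + i + 1)))
      atTop (𝓝 1) := by
    refine tendsto_of_tendsto_of_tendsto_of_le_of_le
      (by simpa using tendsto_one_sub hq0 hq1 (j + 1)) tendsto_const_nhds
      (fun N => by simpa [show N - j - 1 = N - (j + 1) by omega] using W1_lb hq0 hq1 j N)
      (fun N => prod_le_one' hq0 hq1 _ _)
  have hW2 : Tendsto (fun N : ℕ => ∏ i ∈ range (j + 1), (1 - q ^ (N + i + 1)))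
      atTop (𝓝 1) := by
    refine tendsto_of_tendsto_of_tendsto_of_le_of_le
      (by simpa using tendsto_one_sub hq0 hq1 0) tendsto_const_nhds
      (fun N => by simpa using W2_lb hq0 hq1 j N)
      (fun N => prod_le_one' hq0 hq1 _ _)
  have hdiv := hW1.div hW2 one_ne_zero
  rw [div_one] at hdiv
  refine hdiv.congr' ?_
  filter_upwards [eventually_gt_atTop j] with N hN
  exact (rr_eq hq0 hq1 hN).symm

end Stmt1Aux


open Finset Filter Stmt1Aux in
open scoped Topology in
theorem stmt1 (q : ℝ) (hq0 : 0 < q) (hq1 : q < 1) (t : ℝ) :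
    Multipliable (fun n : ℕ =>
      (1 - q ^ (n + 1)) ^ 2 / ((1 - q ^ (n + 1)) ^ 2 + t ^ 2 * q ^ (n + 1))) ∧
    HasSum
      (fun n : ℕ =>
        (-1 : ℝ) ^ n * q ^ ((n + 1) * n / 2) * (1 + q ^ (n + 1)) *
          ((1 - q ^ (n + 1)) ^ 2 / ((1 - q ^ (n + 1)) ^ 2 + t ^ 2 * q ^ (n + 1))))
      (∏' n : ℕ, (1 - q ^ (n + 1)) ^ 2 / ((1 - q ^ (n + 1)) ^ 2 + t ^ 2 * q ^ (n + 1))) := by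
  have hmult : Multipliable (fun n => aa q t n) := multipliable_aa hq0 hq1
  refine ⟨hmult, ?_⟩
  show HasSum (fun n => gg q t n) (∏' n, aa q t n)
  have hsum_abs : Summable (fun j => |gg q t j|) := summable_gg_abs hq0 hq1
  have hg : Summable (gg q t) := hsum_abs.of_abs
  suffices hPS : (∏' n, aa q t n) = ∑' j, gg q t j by rw [hPS]; exact hg.hasSum
  have h1 : Tendsto (fun N => ∏ i ∈ range N, aa q t i) atTop (𝓝 (∏' n, aa q t n)) :=
    hmult.hasProd.tendsto_prod_nat
  set F : ℕ → ℕ → ℝ := fun N j => if j < N then gg q t j * rr q j N else 0 with hF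
  have hlim : ∀ j, Tendsto (fun N => F N j) atTop (𝓝 (gg q t j)) := by
    intro j
    have ht : Tendsto (fun N => gg q t j * rr q j N) atTop (𝓝 (gg q t j * 1)) :=
      (rr_tendsto hq0 hq1 j).const_mul (gg q t j)
    rw [mul_one] at ht
    refine ht.congr' ?_
    filter_upwards [eventually_gt_atTop j] with N hN
    simp only [hF, if_pos hN]
  have hbound : ∀ᶠ N in atTop, ∀ j, ‖F N j‖ ≤ 2 * |gg q t j| := by
    have h0 : Tendsto (fun N : ℕ => q ^ (N + 1) / (1 - q)) atTop (𝓝 (0 : ℝ)) := by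
      have := ((tendsto_pow_atTop_nhds_zero_of_lt_one hq0.le hq1).comp
        (tendsto_add_atTop_nat 1)).div_const (1 - q)
      simpa using this
    filter_upwards [h0.eventually (gt_mem_nhds (by norm_num : (0:ℝ) < 1/2)),
      eventually_gt_atTop 0] with N hN hN0 j
    rcases lt_or_ge j N with hj | hj
    · have hrr := rr_eq hq0 hq1 hj
      have hW1pos : (0:ℝ) < ∏ i ∈ range (j + 1), (1 - q ^ (N - j - 1 + i + 1)) :=
        Finset.prod_pos fun i _ => by
          have := (qp01 hq0 hq1 (by omega : N - j - 1 + i + 1 ≠ 0)).2; linarith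
      have hW1le : (∏ i ∈ range (j + 1), (1 - q ^ (N - j - 1 + i + 1))) ≤ 1 :=
        prod_le_one' hq0 hq1 _ _
      have hW2lb : (1:ℝ)/2 ≤ ∏ i ∈ range (j + 1), (1 - q ^ (N + i + 1)) := by
        have := W2_lb hq0 hq1 j N
        linarith
      have hW2pos : (0:ℝ) < ∏ i ∈ range (j + 1), (1 - q ^ (N + i + 1)) := by linarith
      have hrr_le : rr q j N ≤ 2 := by
        rw [hrr, div_le_iff₀ hW2pos]
        linarith
      have hrr_pos : 0 < rr q j N := by
        rw [hrr]
        exact div_pos hW1pos hW2pos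
      simp only [hF, if_pos hj, Real.norm_eq_abs, abs_mul, abs_of_pos hrr_pos]
      nlinarith [abs_nonneg (gg q t j)]
    · simp only [hF, if_neg (by omega : ¬ j < N), norm_zero]
      positivity
  have h2 : Tendsto (fun N => ∑' j, F N j) atTop (𝓝 (∑' j, gg q t j)) :=
    tendsto_tsum_of_dominated_convergence (hsum_abs.mul_left 2) hlim hbound
  have h3 : (fun N => ∑' j, F N j) =ᶠ[atTop] (fun N => ∏ i ∈ range N, aa q t i) := by
    filter_upwards [eventually_gt_atTop 0] with N hN
    rw [key hq0 hq1 hN]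
    rw [tsum_eq_sum (s := range N) (f := F N)
      (fun j hj => if_neg (by simpa using hj))]
    exact Finset.sum_congr rfl fun j hj => if_pos (Finset.mem_range.mp hj)
  exact (tendsto_nhds_unique (h2.congr' h3) h1).symm
end

section
/- For every positive integer k, the rescaled q-zeta value satisfies lim_{q→1⁻} (1−q)^{2k} ζ_q(2k) = ζ(2k), where ζ is the Riemann zeta function. -/
open scoped BigOperators Topology

/-- The q-zeta value `ζ_q(2k) = ∑_{m=1}^∞ q^{mk}/(1-q^m)^{2k}`. -/
noncomputable def qZeta (q : ℝ) (k : ℕ) : ℝ :=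
  ∑' n : ℕ, q ^ ((n + 1) * k) / (1 - q ^ (n + 1)) ^ (2 * k)

open Filter Finset in
private lemma geom_lb {q : ℝ} (hq0 : 0 < q) (hq1 : q < 1) (n : ℕ) :
    ((n : ℝ) + 1) ^ 2 * q ^ n ≤ (∑ i ∈ Finset.range (n + 1), q ^ i) ^ 2 := by
  have h := Finset.sum_sq_le_sum_mul_sum_of_sq_eq_mul (Finset.range (n + 1))
    (r := fun _ => Real.sqrt (q ^ n)) (f := fun i => q ^ i) (g := fun i => q ^ (n - i))
    (fun i _ => by positivity) (fun i _ => by positivity)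
    (fun i hi => by
      rw [Real.sq_sqrt (by positivity), ← pow_add]
      congr 1
      have := Finset.mem_range.mp hi
      omega)
  rw [Finset.sum_const, Finset.card_range, nsmul_eq_mul, mul_pow,
    Real.sq_sqrt (by positivity)] at h
  have hrefl : ∑ i ∈ Finset.range (n + 1), q ^ (n - i)
      = ∑ i ∈ Finset.range (n + 1), q ^ i := by
    rw [← Finset.sum_range_reflect]
    apply Finset.sum_congr rfl
    intro i hi
    congr 1
    have := Finset.mem_range.mp hi
    omega
  rw [hrefl, ← sq] at h
  calc ((n : ℝ) + 1) ^ 2 * q ^ n = (((n:ℕ) + 1 : ℕ) : ℝ) ^ 2 * q ^ n := by push_cast; ring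
    _ ≤ _ := h

theorem stmt3 (k : ℕ) (hk : 0 < k) :
    Filter.Tendsto (fun q : ℝ => (1 - q) ^ (2 * k) * qZeta q k)
      (𝓝[<] (1 : ℝ)) (𝓝 (∑' m : ℕ, 1 / ((m : ℝ) + 1) ^ (2 * k))) := by
  classical
  set F : ℝ → ℕ → ℝ := fun q n =>
    q ^ ((n + 1) * k) / (∑ i ∈ Finset.range (n + 1), q ^ i) ^ (2 * k) with hF
  have hmem : Set.Ioo (0 : ℝ) 1 ∈ 𝓝[<] (1 : ℝ) :=
    Ioo_mem_nhdsLT_of_mem (by constructor <;> norm_num)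
  -- the bound
  have hbound : ∀ q ∈ Set.Ioo (0:ℝ) 1, ∀ n : ℕ, ‖F q n‖ ≤ 1 / ((n:ℝ) + 1) ^ (2 * k) := by
    rintro q ⟨hq0, hq1⟩ n
    have hS : (0:ℝ) < ∑ i ∈ Finset.range (n + 1), q ^ i :=
      Finset.sum_pos (fun i _ => by positivity) ⟨0, Finset.mem_range.mpr n.succ_pos⟩
    have hFnn : 0 ≤ F q n := div_nonneg (by positivity) (by positivity)
    rw [Real.norm_of_nonneg hFnn]
    have key : ((n:ℝ) + 1) ^ (2 * k) * q ^ (n * k)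
        ≤ (∑ i ∈ Finset.range (n + 1), q ^ i) ^ (2 * k) := by
      calc ((n:ℝ) + 1) ^ (2 * k) * q ^ (n * k)
          = ((((n:ℝ) + 1) ^ 2) * q ^ n) ^ k := by
            rw [mul_pow, ← pow_mul, ← pow_mul]
        _ ≤ ((∑ i ∈ Finset.range (n + 1), q ^ i) ^ 2) ^ k :=
            pow_le_pow_left₀ (by positivity) (geom_lb hq0 hq1 n) k
        _ = _ := by rw [← pow_mul]
    have hden : (0:ℝ) < ((n:ℝ) + 1) ^ (2 * k) * q ^ (n * k) := by positivity
    calc F q n ≤ q ^ ((n + 1) * k) / (((n:ℝ) + 1) ^ (2 * k) * q ^ (n * k)) := by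
          apply div_le_div_of_nonneg_left (by positivity) hden key
      _ = q ^ k / ((n:ℝ) + 1) ^ (2 * k) := by
          rw [show (n + 1) * k = n * k + k by ring, pow_add]
          field_simp
      _ ≤ 1 / ((n:ℝ) + 1) ^ (2 * k) := by
          gcongr
          exact pow_le_one₀ hq0.le hq1.le
  -- summability of the bound
  have hsum : Summable fun n : ℕ => 1 / ((n:ℝ) + 1) ^ (2 * k) := by
    have h0 : Summable fun n : ℕ => 1 / ((n:ℝ)) ^ (2 * k) :=
      Real.summable_one_div_nat_pow.mpr (by omega)
    have := (summable_nat_add_iff 1).mpr h0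
    exact this.congr fun n => by push_cast; ring_nf
  -- pointwise limits
  have hlim : ∀ n : ℕ, Filter.Tendsto (fun q => F q n) (𝓝[<] (1:ℝ))
      (𝓝 (1 / ((n:ℝ) + 1) ^ (2 * k))) := by
    intro n
    have hc : ContinuousAt (fun q : ℝ => F q n) 1 := by
      apply ContinuousAt.div
      · exact (continuous_pow _).continuousAt
      · exact ((continuous_finset_sum _ fun i _ => continuous_pow i).pow _).continuousAt
      · simp only [one_pow, Finset.sum_const, Finset.card_range, smul_eq_mul, mul_one]
        positivity
    have hval : F 1 n = 1 / ((n:ℝ) + 1) ^ (2 * k) := by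
      simp only [hF, one_pow, Finset.sum_const, Finset.card_range, smul_eq_mul, mul_one]
      push_cast
      ring
    rw [← hval]
    exact hc.continuousWithinAt.tendsto
  -- dominated convergence
  have hmain : Filter.Tendsto (fun q => ∑' n, F q n) (𝓝[<] (1:ℝ))
      (𝓝 (∑' m : ℕ, 1 / ((m : ℝ) + 1) ^ (2 * k))) :=
    tendsto_tsum_of_dominated_convergence hsum hlim
      (Filter.eventually_iff_exists_mem.mpr ⟨_, hmem, hbound⟩)
  -- identify the two functions eventually
  apply hmain.congr'
  filter_upwards [hmem] with q hq
  obtain ⟨hq0, hq1⟩ := hq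
  rw [qZeta, ← tsum_mul_left]
  apply tsum_congr
  intro n
  have hS : (0:ℝ) < ∑ i ∈ Finset.range (n + 1), q ^ i :=
    Finset.sum_pos (fun i _ => by positivity) ⟨0, Finset.mem_range.mpr n.succ_pos⟩
  have hfac : (1 - q) * ∑ i ∈ Finset.range (n + 1), q ^ i = 1 - q ^ (n + 1) := by
    linear_combination -(geom_sum_mul q (n + 1))
  rw [hF]
  rw [← hfac, mul_pow]
  have h1q : (1 : ℝ) - q ≠ 0 := by linarith
  field_simp
end

section
/- For every real q with 0 < q < 1 and every real t, the series ∑_{m odd, m ≥ 1} (−1)^{(m−1)/2} q^{(m^2−1)/4} (1+q^m)(1−q^m)/((1−q^m)^2 + t^2 q^m) converges, the infinite product ∏_{m odd, m ≥ 1} (1−q^m)^2/((1−q^m)^2 + t^2 q^m) converges, and the series equals ψ(q)^2 times the product. -/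
open Finset Filter Topology

namespace Stmt11

/-- helper: summability from geometric bound -/
lemma summable_of_geom {f : ℕ → ℝ} {q C : ℝ} (hq0 : 0 ≤ q) (hq1 : q < 1)
    (h : ∀ n, |f n| ≤ C * q ^ n) : Summable f := by
  apply Summable.of_abs
  apply Summable.of_nonneg_of_le (fun n => abs_nonneg _) h
  exact (summable_geometric_of_lt_one hq0 hq1).mul_left C

/-- helper: |log y| ≤ |y-1| * max 1 b⁻¹ for y ≥ b > 0 -/
lemma abs_log_le {y b : ℝ} (hb : 0 < b) (hy : b ≤ y) :
    |Real.log y| ≤ |y - 1| * max 1 b⁻¹ := by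
  have hy0 : 0 < y := lt_of_lt_of_le hb hy
  rcases le_or_gt 1 y with h1 | h1
  · rw [abs_of_nonneg (Real.log_nonneg h1), abs_of_nonneg (by linarith)]
    calc Real.log y ≤ y - 1 := Real.log_le_sub_one_of_pos hy0
    _ ≤ (y - 1) * max 1 b⁻¹ := le_mul_of_one_le_right (by linarith) (le_max_left _ _)
  · rw [abs_of_nonpos (Real.log_nonpos (le_of_lt hy0) h1.le), abs_of_nonpos (by linarith)]
    have hlog : Real.log y⁻¹ ≤ y⁻¹ - 1 := Real.log_le_sub_one_of_pos (by positivity)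
    rw [Real.log_inv] at hlog
    have hyinv : y⁻¹ ≤ b⁻¹ := inv_anti₀ hb hy
    have h2 : -Real.log y ≤ y⁻¹ - 1 := by linarith
    have h3 : y⁻¹ - 1 = (1 - y) * y⁻¹ := by field_simp
    have h4 : (1 - y) * y⁻¹ ≤ (1 - y) * b⁻¹ := by
      apply mul_le_mul_of_nonneg_left hyinv (by linarith)
    calc -Real.log y ≤ (1 - y) * y⁻¹ := by linarith
    _ ≤ (1 - y) * b⁻¹ := h4
    _ ≤ (1 - y) * max 1 b⁻¹ := by
        apply mul_le_mul_of_nonneg_left (le_max_right _ _) (by linarith)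
    _ = -(y - 1) * max 1 b⁻¹ := by ring

lemma summable_log {f : ℕ → ℝ} {b : ℝ} (hb : 0 < b) (hbf : ∀ n, b ≤ f n)
    (h : Summable fun n => |f n - 1|) : Summable fun n => Real.log (f n) := by
  apply Summable.of_abs
  apply Summable.of_nonneg_of_le (fun n => abs_nonneg _)
    (fun n => abs_log_le hb (hbf n))
  exact h.mul_right _

lemma multipliable_aux {f : ℕ → ℝ} {b : ℝ} (hb : 0 < b) (hbf : ∀ n, b ≤ f n)
    (h : Summable fun n => |f n - 1|) : Multipliable f := by
  have := Real.multipliable_of_summable_log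
    (fun n => lt_of_lt_of_le hb (hbf n)) (summable_log hb hbf h)
  exact this


lemma lagrange_aux {F : Type*} [Field F] {ι : Type*} [DecidableEq ι] (s : Finset ι)
    (hs : s.Nonempty) (v : ι → F) (hv : Set.InjOn v s) (x : F) (hx : ∀ i ∈ s, x - v i ≠ 0) :
    ∑ i ∈ s, ((∏ j ∈ s.erase i, (v i - v j)⁻¹) * (x - v i)⁻¹) = ∏ i ∈ s, (x - v i)⁻¹ := by
  have key := Lagrange.sum_basis hv hs
  have key2 := congrArg (Polynomial.eval x) key
  rw [Polynomial.eval_finset_sum, Polynomial.eval_one] at key2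
  have keval : ∀ i ∈ s, Polynomial.eval x (Lagrange.basis s v i)
      = ∏ j ∈ s.erase i, ((v i - v j)⁻¹ * (x - v j)) := by
    intro i _
    rw [Lagrange.basis, Polynomial.eval_prod]
    refine Finset.prod_congr rfl fun j _ => ?_
    simp only [Lagrange.basisDivisor, Polynomial.eval_smul, Polynomial.eval_sub,
      Polynomial.eval_X, Polynomial.eval_C, smul_eq_mul, Polynomial.eval_mul]
  rw [Finset.sum_congr rfl keval] at key2
  -- multiply by ∏ (x - v i)⁻¹
  have hprodne : ∏ i ∈ s, (x - v i) ≠ 0 := Finset.prod_ne_zero_iff.mpr hx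
  have term : ∀ i ∈ s, (∏ j ∈ s.erase i, ((v i - v j)⁻¹ * (x - v j))) * (∏ i ∈ s, (x - v i))⁻¹
      = (∏ j ∈ s.erase i, (v i - v j)⁻¹) * (x - v i)⁻¹ := by
    intro i hi
    rw [Finset.prod_mul_distrib, mul_assoc]
    have h1 : (∏ j ∈ s.erase i, (x - v j)) * (x - v i) = ∏ j ∈ s, (x - v j) :=
      Finset.prod_erase_mul s _ hi
    have h3 : (∏ j ∈ s.erase i, (x - v j)) ≠ 0 :=
      Finset.prod_ne_zero_iff.mpr (fun j hj => hx j (Finset.mem_of_mem_erase hj))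
    congr 1
    rw [← h1, mul_inv, ← mul_assoc, mul_inv_cancel₀ h3, one_mul]
  calc ∑ i ∈ s, ((∏ j ∈ s.erase i, (v i - v j)⁻¹) * (x - v i)⁻¹)
      = ∑ i ∈ s, (∏ j ∈ s.erase i, ((v i - v j)⁻¹ * (x - v j))) * (∏ i ∈ s, (x - v i))⁻¹ := by
        exact (Finset.sum_congr rfl term).symm
    _ = (∑ i ∈ s, ∏ j ∈ s.erase i, ((v i - v j)⁻¹ * (x - v j))) * (∏ i ∈ s, (x - v i))⁻¹ := by
        rw [Finset.sum_mul]
    _ = ∏ i ∈ s, (x - v i)⁻¹ := by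
        rw [key2, one_mul, ← Finset.prod_inv_distrib]


noncomputable def Dk (q u : ℝ) (k : ℕ) : ℝ := (1 - q ^ (2*k+1))^2 + u * q^(2*k+1)

noncomputable def B (q : ℝ) (N k : ℕ) : ℝ :=
  ∏ j ∈ (range (N+1)).erase k,
    (q^(2*k+1) / ((q^(2*k+1) - q^(2*j+1)) * (1 - q^(2*j+1) * q^(2*k+1))))

noncomputable def PR (q : ℝ) (M : ℕ) : ℝ := ∏ i ∈ range M, (1 - q^(2*(i+1)))

section qfacts
variable {q u : ℝ} (hq0 : 0 < q) (hq1 : q < 1) (hu : 0 ≤ u)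

include hq0 hq1 in
lemma hmlt (k : ℕ) : q^(2*k+1) < 1 := pow_lt_one₀ (le_of_lt hq0) hq1 (by omega)

include hq0 hq1 in
lemma hmle (k : ℕ) : q^(2*k+1) ≤ q := by
  calc q^(2*k+1) ≤ q^1 := pow_le_pow_of_le_one (le_of_lt hq0) (le_of_lt hq1) (by omega)
  _ = q := pow_one q

include hq0 hq1 hu in
lemma hD_ge (k : ℕ) : (1-q)^2 ≤ Dk q u k := by
  have h1 := hmle hq0 hq1 k
  have h2 : 0 < q^(2*k+1) := by positivity
  unfold Dk
  nlinarith

include hq0 hq1 hu in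
lemma hD_pos (k : ℕ) : 0 < Dk q u k := by
  have := hD_ge hq0 hq1 hu k
  nlinarith

include hq0 hq1 in
lemma hmne {i j : ℕ} (h : i ≠ j) : q^(2*i+1) ≠ q^(2*j+1) := by
  have key : ∀ a b : ℕ, a < b → q^(2*b+1) < q^(2*a+1) := fun a b hab =>
    pow_lt_pow_right_of_lt_one₀ hq0 hq1 (by omega)
  rcases lt_or_gt_of_ne h with h' | h'
  · exact (key i j h').ne'
  · exact (key j i h').ne

include hq0 hq1 hu in
lemma keyA (N : ℕ) :
    ∑ k ∈ range (N+1), B q N k / Dk q u k = ∏ k ∈ range (N+1), (Dk q u k)⁻¹ := by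
  set v : ℕ → ℝ := fun k => -(1 - q^(2*k+1))^2 / q^(2*k+1) with hv
  have hmpos : ∀ k : ℕ, (0:ℝ) < q^(2*k+1) := fun k => by positivity
  have F1 : ∀ k : ℕ, u - v k = Dk q u k / q^(2*k+1) := by
    intro k
    rw [hv]
    have := (hmpos k).ne'
    field_simp [Dk]
    unfold Dk
    ring
  have F2 : ∀ i j : ℕ, v i - v j
      = (q^(2*i+1) - q^(2*j+1)) * (1 - q^(2*j+1) * q^(2*i+1)) / (q^(2*i+1) * q^(2*j+1)) := by
    intro i j
    rw [hv]
    have := (hmpos i).ne'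
    have := (hmpos j).ne'
    field_simp
    ring
  have hmm1 : ∀ i j : ℕ, q^(2*j+1) * q^(2*i+1) < 1 := by
    intro i j
    nlinarith [hmpos i, hmpos j, hmlt hq0 hq1 i, hmlt hq0 hq1 j]
  have Fne : ∀ i j : ℕ, i ≠ j → v i - v j ≠ 0 := by
    intro i j hij
    rw [F2]
    apply div_ne_zero
    · exact mul_ne_zero (sub_ne_zero.mpr (hmne hq0 hq1 hij))
        (by have := hmm1 i j; intro hc; nlinarith)
    · exact (mul_pos (hmpos i) (hmpos j)).ne'
  have hinj : Set.InjOn v (range (N+1)) := by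
    intro i _ j _ hij
    by_contra hc
    exact Fne i j hc (by rw [hij]; ring)
  have hx : ∀ i ∈ range (N+1), u - v i ≠ 0 := by
    intro i _
    rw [F1]
    exact div_ne_zero (hD_pos hq0 hq1 hu i).ne' (hmpos i).ne'
  have lag := lagrange_aux (range (N+1)) (by simp) v hinj u hx
  -- now translate
  have hPmne : (∏ k ∈ range (N+1), q^(2*k+1)) ≠ 0 :=
    Finset.prod_ne_zero_iff.mpr (fun k _ => (hmpos k).ne')
  apply mul_left_cancel₀ hPmne
  have RHSeq : ∏ i ∈ range (N+1), (u - v i)⁻¹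
      = (∏ k ∈ range (N+1), q^(2*k+1)) * ∏ k ∈ range (N+1), (Dk q u k)⁻¹ := by
    rw [← Finset.prod_mul_distrib]
    refine Finset.prod_congr rfl fun k _ => ?_
    rw [F1, inv_div]
    ring
  have LHSeq : ∑ i ∈ range (N+1), ((∏ j ∈ (range (N+1)).erase i, (v i - v j)⁻¹) * (u - v i)⁻¹)
      = (∏ k ∈ range (N+1), q^(2*k+1)) * ∑ k ∈ range (N+1), B q N k / Dk q u k := by
    rw [Finset.mul_sum]
    refine Finset.sum_congr rfl fun k hk => ?_
    have hterm : ∀ j ∈ (range (N+1)).erase k, (v k - v j)⁻¹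
        = q^(2*j+1) * (q^(2*k+1) / ((q^(2*k+1) - q^(2*j+1)) * (1 - q^(2*j+1) * q^(2*k+1)))) := by
      intro j _
      rw [F2, inv_div]
      ring
    rw [Finset.prod_congr rfl hterm, Finset.prod_mul_distrib, F1, inv_div]
    show (∏ j ∈ (range (N+1)).erase k, q^(2*j+1)) * B q N k * (q^(2*k+1) / Dk q u k)
      = (∏ k ∈ range (N+1), q^(2*k+1)) * (B q N k / Dk q u k)
    rw [← Finset.prod_erase_mul (range (N+1)) (fun k => q^(2*k+1)) hk]
    ring
  rw [← RHSeq, ← LHSeq, lag]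


include hq0 hq1 in
lemma PR_pos (M : ℕ) : 0 < PR q M := by
  apply Finset.prod_pos
  intro i _
  have : q^(2*(i+1)) < 1 := pow_lt_one₀ (le_of_lt hq0) hq1 (by omega)
  linarith

include hq0 hq1 in
lemma hq_lt_one (e : ℕ) (he : 1 ≤ e) : q^e < 1 := pow_lt_one₀ (le_of_lt hq0) hq1 (by omega)

lemma sum_2succ (k : ℕ) : ∑ j ∈ range k, 2*(j+1) = k*(k+1) := by
  induction k with
  | zero => simp
  | succ n ih => rw [Finset.sum_range_succ, ih]; ring

lemma aux_fracL {a c P : ℝ} (ha : a ≠ 0) (hc : 1 - c ≠ 0) (hP : 1 - P ≠ 0) :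
    (a*c) / ((a*c - a) * (1 - P)) = ((-1) * c) * ((1 - c)⁻¹ * (1 - P)⁻¹) := by
  rw [show a*c - a = -(a * (1 - c)) by ring]
  field_simp

lemma aux_fracR {a c P : ℝ} (ha : a ≠ 0) (hc : 1 - c ≠ 0) (hP : 1 - P ≠ 0) :
    a / ((a - a*c) * (1 - P)) = (1 - c)⁻¹ * (1 - P)⁻¹ := by
  rw [show a - a*c = a * (1 - c) by ring]
  field_simp

include hq0 hq1 in
lemma keyCF {N k : ℕ} (hk : k ≤ N) :
    B q N k = ((-1:ℝ)^k * q^(k*(k+1)) * (1 - q^(2*(2*k+1)))) / (PR q (N-k) * PR q (k+N+1)) := by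
  have hqne : q ≠ 0 := hq0.ne'
  have hpos : ∀ e : ℕ, 1 ≤ e → (0:ℝ) < 1 - q^e := fun e he => by
    have := hq_lt_one hq0 hq1 e he; linarith
  -- split the index set
  have hsplit : (range (N+1)).erase k = range k ∪ Ico (k+1) (N+1) := by
    ext j
    simp only [Finset.mem_erase, Finset.mem_range, Finset.mem_union, Finset.mem_Ico]
    omega
  have hdisj : Disjoint (range k) (Ico (k+1) (N+1)) := by
    rw [Finset.disjoint_left]
    intro j hj hj'
    simp only [Finset.mem_range] at hj
    simp only [Finset.mem_Ico] at hj'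
    omega
  rw [B, hsplit, Finset.prod_union hdisj]
  -- left part
  have P_left : ∏ j ∈ range k,
      (q^(2*k+1) / ((q^(2*k+1) - q^(2*j+1)) * (1 - q^(2*j+1) * q^(2*k+1))))
      = ((-1:ℝ)^k * q^(k*(k+1))) *
        ((PR q k)⁻¹ * (∏ j ∈ range k, (1 - q^(2*(j+k+1))))⁻¹) := by
    have hterm : ∀ j ∈ range k,
        q^(2*k+1) / ((q^(2*k+1) - q^(2*j+1)) * (1 - q^(2*j+1) * q^(2*k+1)))
        = ((-1) * q^(2*(k-j))) * ((1 - q^(2*(k-j)))⁻¹ * (1 - q^(2*(j+k+1)))⁻¹) := by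
      intro j hj
      rw [Finset.mem_range] at hj
      have e1 : q^(2*k+1) = q^(2*j+1) * q^(2*(k-j)) := by
        rw [← pow_add]; congr 1; omega
      rw [e1, show q^(2*j+1) * (q^(2*j+1) * q^(2*(k-j))) = q^(2*(j+k+1)) by
        rw [← pow_add, ← pow_add]; congr 1; omega]
      exact aux_fracL (by positivity) (hpos _ (by omega)).ne' (hpos _ (by omega)).ne'
    rw [Finset.prod_congr rfl hterm, Finset.prod_mul_distrib, Finset.prod_mul_distrib,
      Finset.prod_mul_distrib]
    have c1 : ∏ _j ∈ range k, (-1:ℝ) = (-1:ℝ)^k := by simp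
    have c2 : ∏ j ∈ range k, q^(2*(k-j)) = q^(k*(k+1)) := by
      rw [Finset.prod_pow_eq_pow_sum]
      congr 1
      rw [← sum_2succ k]
      calc ∑ j ∈ range k, 2*(k-j)
          = ∑ j ∈ range k, 2*((k-1-j)+1) := Finset.sum_congr rfl (fun j hj => by
            rw [Finset.mem_range] at hj; omega)
        _ = ∑ j ∈ range k, 2*(j+1) := Finset.sum_range_reflect (fun i => 2*(i+1)) k
    have c3 : ∏ j ∈ range k, (1 - q^(2*(k-j)))⁻¹ = (PR q k)⁻¹ := by
      rw [Finset.prod_inv_distrib]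
      congr 1
      calc ∏ j ∈ range k, (1 - q^(2*(k-j)))
          = ∏ j ∈ range k, (1 - q^(2*((k-1-j)+1))) := Finset.prod_congr rfl (fun j hj => by
            rw [Finset.mem_range] at hj; congr 2; omega)
        _ = ∏ j ∈ range k, (1 - q^(2*(j+1))) := Finset.prod_range_reflect (fun i => 1 - q^(2*(i+1))) k
        _ = PR q k := rfl
    rw [c1, c2, c3, Finset.prod_inv_distrib]
  -- right part
  have P_right : ∏ j ∈ Ico (k+1) (N+1),
      (q^(2*k+1) / ((q^(2*k+1) - q^(2*j+1)) * (1 - q^(2*j+1) * q^(2*k+1))))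
      = (PR q (N-k))⁻¹ * (∏ j ∈ Ico (k+1) (N+1), (1 - q^(2*(j+k+1))))⁻¹ := by
    have hterm : ∀ j ∈ Ico (k+1) (N+1),
        q^(2*k+1) / ((q^(2*k+1) - q^(2*j+1)) * (1 - q^(2*j+1) * q^(2*k+1)))
        = (1 - q^(2*(j-k)))⁻¹ * (1 - q^(2*(j+k+1)))⁻¹ := by
      intro j hj
      rw [Finset.mem_Ico] at hj
      have e1 : q^(2*j+1) = q^(2*k+1) * q^(2*(j-k)) := by
        rw [← pow_add]; congr 1; omega
      rw [e1, show q^(2*k+1) * q^(2*(j-k)) * q^(2*k+1) = q^(2*(j+k+1)) by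
        rw [← pow_add, ← pow_add]; congr 1; omega]
      exact aux_fracR (by positivity) (hpos _ (by omega)).ne' (hpos _ (by omega)).ne'
    rw [Finset.prod_congr rfl hterm, Finset.prod_mul_distrib]
    have c4 : ∏ j ∈ Ico (k+1) (N+1), (1 - q^(2*(j-k)))⁻¹ = (PR q (N-k))⁻¹ := by
      rw [Finset.prod_inv_distrib]
      congr 1
      rw [Finset.prod_Ico_eq_prod_range]
      refine Finset.prod_congr (by congr 1; omega) fun j _ => by congr 2; omega
    rw [c4, Finset.prod_inv_distrib]
  rw [P_left, P_right]
  -- combine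
  have hXa : (0:ℝ) < ∏ j ∈ range k, (1 - q^(2*(j+k+1))) :=
    Finset.prod_pos fun j _ => hpos _ (by omega)
  have hXb : (0:ℝ) < ∏ j ∈ Ico (k+1) (N+1), (1 - q^(2*(j+k+1))) :=
    Finset.prod_pos fun j hj => hpos _ (by omega)
  have hprodsplit : ((∏ j ∈ range k, (1 - q^(2*(j+k+1)))) * (∏ j ∈ Ico (k+1) (N+1), (1 - q^(2*(j+k+1)))))
      * (1 - q^(2*(2*k+1))) = ∏ j ∈ range (N+1), (1 - q^(2*(j+k+1))) := by
    rw [← Finset.prod_union hdisj, ← hsplit]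
    have h0 : (1 - q^(2*(2*k+1))) = (fun j => 1 - q^(2*(j+k+1))) k := by
      simp only []
      congr 2
      omega
    rw [h0]
    exact Finset.prod_erase_mul _ _ (by simp only [Finset.mem_range]; omega)
  have hPRadd : PR q k * (∏ j ∈ range (N+1), (1 - q^(2*(j+k+1)))) = PR q (k+N+1) := by
    have h := Finset.prod_range_add (fun i : ℕ => 1 - q^(2*(i+1))) k (N+1)
    rw [PR, PR, show k+N+1 = k+(N+1) by omega, h]
    congr 1
    exact Finset.prod_congr rfl fun j _ => by congr 2; omega
  have hPRk : 0 < PR q k := PR_pos hq0 hq1 k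
  have hPRNk : 0 < PR q (N-k) := PR_pos hq0 hq1 (N-k)
  have h2k : (0:ℝ) < 1 - q^(2*(2*k+1)) := hpos _ (by omega)
  rw [eq_div_iff (mul_pos hPRNk (PR_pos hq0 hq1 (k+N+1))).ne']
  rw [← hPRadd, ← hprodsplit]
  field_simp


include hq0 hq1 in
lemma hqpow_le_q (e : ℕ) (he : 1 ≤ e) : q^e ≤ q := by
  calc q^e ≤ q^1 := pow_le_pow_of_le_one (le_of_lt hq0) (le_of_lt hq1) he
  _ = q := pow_one q

include hq0 hq1 in
lemma mult_of_bound {f : ℕ → ℝ} {b C : ℝ} (hb : 0 < b) (hbf : ∀ n, b ≤ f n)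
    (h : ∀ n, |f n - 1| ≤ C * q^n) : Multipliable f :=
  multipliable_aux hb hbf (summable_of_geom hq0.le hq1 (f := fun n => |f n - 1|)
    (fun n => by rw [abs_abs]; exact h n))

include hq0 hq1 in
lemma sumgeom_of_bound {f : ℕ → ℝ} {b C : ℝ} (hb : 0 < b) (hbf : ∀ n, b ≤ f n)
    (h : ∀ n, |f n - 1| ≤ C * q^n) : Summable (fun n => |f n - 1|) :=
  summable_of_geom hq0.le hq1 (f := fun n => |f n - 1|)
    (fun n => by rw [abs_abs]; exact h n)

include hq0 hq1 in
lemma num_bound (n : ℕ) : |(1 - q^(2*(n+1))) - 1| ≤ 1 * q^n := by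
  rw [show (1 - q^(2*(n+1))) - 1 = -(q^(2*(n+1))) by ring, abs_neg,
    abs_of_nonneg (by positivity), one_mul]
  exact pow_le_pow_of_le_one hq0.le hq1.le (by omega)

include hq0 hq1 in
lemma den_bound (n : ℕ) : |(1 - q^(2*n+1)) - 1| ≤ 1 * q^n := by
  rw [show (1 - q^(2*n+1)) - 1 = -(q^(2*n+1)) by ring, abs_neg,
    abs_of_nonneg (by positivity), one_mul]
  exact pow_le_pow_of_le_one hq0.le hq1.le (by omega)

include hq0 hq1 in
lemma num_lb (n : ℕ) : 1 - q ≤ 1 - q^(2*(n+1)) := by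
  have := hqpow_le_q hq0 hq1 (2*(n+1)) (by omega); linarith

include hq0 hq1 in
lemma den_lb (n : ℕ) : 1 - q ≤ 1 - q^(2*n+1) := by
  have := hqpow_le_q hq0 hq1 (2*n+1) (by omega); linarith

include hq0 hq1 in
lemma mult_num : Multipliable (fun n : ℕ => 1 - q^(2*(n+1))) :=
  mult_of_bound hq0 hq1 (b := 1 - q) (by linarith) (num_lb hq0 hq1) (num_bound hq0 hq1)

include hq0 hq1 in
lemma mult_den : Multipliable (fun n : ℕ => 1 - q^(2*n+1)) :=
  mult_of_bound hq0 hq1 (b := 1 - q) (by linarith) (den_lb hq0 hq1) (den_bound hq0 hq1)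

include hq0 hq1 in
lemma mult_sq : Multipliable (fun n : ℕ => (1 - q^(2*n+1))^2) := by
  apply mult_of_bound hq0 hq1 (b := (1 - q)^2) (by nlinarith) (C := 3)
  · intro n
    have h1 := den_lb hq0 hq1 n
    have h2 : 0 < q^(2*n+1) := by positivity
    nlinarith
  · intro n
    have h2 : 0 < q^(2*n+1) := by positivity
    have h3 : q^(2*n+1) ≤ q^n := pow_le_pow_of_le_one hq0.le hq1.le (by omega)
    have h4 : q^(2*n+1) < 1 := hmlt hq0 hq1 n
    rw [abs_le]
    constructor <;> nlinarith

include hq0 hq1 in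
lemma mult_ratio : Multipliable (fun n : ℕ => (1 - q^(2*(n+1))) / (1 - q^(2*n+1))) := by
  apply mult_of_bound hq0 hq1 (b := 1 - q) (by linarith) (C := (1-q)⁻¹)
  · intro n
    have h1 := den_lb hq0 hq1 n
    have h2 := num_lb hq0 hq1 n
    have hden : 0 < 1 - q^(2*n+1) := by linarith
    rw [le_div_iff₀ hden]
    have hnum : 0 ≤ 1 - q^(2*(n+1)) := by linarith
    have h2' : 0 < q^(2*n+1) := by positivity
    have h4 : q^(2*n+1) < 1 := hmlt hq0 hq1 n
    have hstep : q^(2*(n+1)) = q^(2*n+1) * q := by ring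
    nlinarith
  · intro n
    have h1 := den_lb hq0 hq1 n
    have hden : 0 < 1 - q^(2*n+1) := by linarith
    have hkey : (1 - q^(2*(n+1))) / (1 - q^(2*n+1)) - 1
        = (q^(2*n+1) - q^(2*(n+1))) / (1 - q^(2*n+1)) := by
      field_simp
      ring
    rw [hkey, abs_div, abs_of_pos hden]
    have hnum2 : |q^(2*n+1) - q^(2*(n+1))| ≤ q^n := by
      have h5 : q^(2*(n+1)) ≤ q^(2*n+1) := pow_le_pow_of_le_one hq0.le hq1.le (by omega)
      have h6 : q^(2*n+1) ≤ q^n := pow_le_pow_of_le_one hq0.le hq1.le (by omega)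
      have h7 : 0 < q^(2*(n+1)) := by positivity
      rw [abs_of_nonneg (by linarith)]
      linarith
    calc |q^(2*n+1) - q^(2*(n+1))| / (1 - q^(2*n+1)) ≤ q^n / (1-q) :=
      div_le_div₀ (by positivity) hnum2 (by linarith) h1
    _ = (1-q)⁻¹ * q^n := by ring

include hq0 hq1 hu in
lemma mult_Dinv : Multipliable (fun n : ℕ => (Dk q u n)⁻¹) := by
  apply mult_of_bound hq0 hq1 (b := (1+u)⁻¹) (inv_pos.mpr (by linarith)) (C := (3+u)/(1-q)^2)
  · intro n
    apply inv_anti₀ (hD_pos hq0 hq1 hu n)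
    have h4 : q^(2*n+1) < 1 := hmlt hq0 hq1 n
    have h2 : 0 < q^(2*n+1) := by positivity
    have h3 : q^(2*n+1) ≤ 1 := h4.le
    unfold Dk
    nlinarith
  · intro n
    have hD := hD_pos hq0 hq1 hu n
    have hDg := hD_ge hq0 hq1 hu n
    have hkey : (Dk q u n)⁻¹ - 1 = (1 - Dk q u n) / Dk q u n := by
      rw [eq_div_iff hD.ne', sub_mul, inv_mul_cancel₀ hD.ne', one_mul]
    rw [hkey, abs_div, abs_of_pos hD]
    have h2 : 0 < q^(2*n+1) := by positivity
    have h3 : q^(2*n+1) ≤ q^n := pow_le_pow_of_le_one hq0.le hq1.le (by omega)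
    have h4 : q^(2*n+1) < 1 := hmlt hq0 hq1 n
    have hnum : |1 - Dk q u n| ≤ (3+u) * q^n := by
      rw [abs_le]
      unfold Dk
      constructor <;> nlinarith [mul_nonneg hu h2.le, mul_le_mul_of_nonneg_left h3 hu]
    calc |1 - Dk q u n| / Dk q u n ≤ ((3+u) * q^n) / (1-q)^2 :=
      div_le_div₀ (by positivity) hnum (by nlinarith) hDg
    _ = (3+u)/(1-q)^2 * q^n := by ring

include hq0 hq1 hu in
lemma mult_my : Multipliable (fun n : ℕ => (1 - q^(2*n+1))^2 / Dk q u n) := by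
  apply mult_of_bound hq0 hq1 (b := (1-q)^2/(1+u)) (div_pos (by nlinarith) (by linarith)) (C := u/(1-q)^2)
  · intro n
    have hD := hD_pos hq0 hq1 hu n
    have h1 := den_lb hq0 hq1 n
    have h4 : q^(2*n+1) < 1 := hmlt hq0 hq1 n
    have h2 : 0 < q^(2*n+1) := by positivity
    apply div_le_div₀ (by positivity) (by nlinarith) hD
    unfold Dk
    nlinarith
  · intro n
    have hD := hD_pos hq0 hq1 hu n
    have hDg := hD_ge hq0 hq1 hu n
    have h2 : 0 < q^(2*n+1) := by positivity
    have h3 : q^(2*n+1) ≤ q^n := pow_le_pow_of_le_one hq0.le hq1.le (by omega)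
    have hkey : (1 - q^(2*n+1))^2 / Dk q u n - 1 = -(u * q^(2*n+1)) / Dk q u n := by
      rw [eq_div_iff hD.ne', sub_mul, div_mul_cancel₀ _ hD.ne', one_mul]
      unfold Dk; ring
    rw [hkey, abs_div, abs_of_pos hD, abs_neg, abs_of_nonneg (by positivity)]
    calc u * q^(2*n+1) / Dk q u n ≤ (u * q^n) / (1-q)^2 :=
      div_le_div₀ (by positivity) (by nlinarith [mul_le_mul_of_nonneg_left h3 hu]) (by nlinarith) hDg
    _ = u/(1-q)^2 * q^n := by ring


include hq0 hq1 in
lemma summable_abs_log_num : Summable (fun n : ℕ => |Real.log (1 - q^(2*(n+1)))|) := by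
  have hsum : Summable (fun n : ℕ => |(1 - q^(2*(n+1))) - 1|) :=
    sumgeom_of_bound hq0 hq1 (b := 1-q) (by linarith) (num_lb hq0 hq1) (num_bound hq0 hq1)
  apply Summable.of_nonneg_of_le (fun n => abs_nonneg _)
    (fun n => abs_log_le (show (0:ℝ) < 1-q by linarith) (num_lb hq0 hq1 n))
  exact hsum.mul_right _

include hq0 hq1 in
lemma PR_ge (M : ℕ) :
    Real.exp (-(∑' n : ℕ, |Real.log (1 - q^(2*(n+1)))|)) ≤ PR q M := by
  have hpos : ∀ i : ℕ, (0:ℝ) < 1 - q^(2*(i+1)) := fun i => by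
    have := hq_lt_one hq0 hq1 (2*(i+1)) (by omega); linarith
  have hfe : PR q M = Real.exp (∑ i ∈ range M, Real.log (1 - q^(2*(i+1)))) := by
    rw [Real.exp_sum]
    exact (Finset.prod_congr rfl fun i _ => (Real.exp_log (hpos i)).symm)
  rw [hfe]
  apply Real.exp_le_exp.mpr
  have h2 : ∑ i ∈ range M, |Real.log (1 - q^(2*(i+1)))| ≤ ∑' n : ℕ, |Real.log (1 - q^(2*(n+1)))| :=
    Summable.sum_le_tsum _ (fun _ _ => abs_nonneg _) (summable_abs_log_num hq0 hq1)
  have h3 : ∑ i ∈ range M, (-|Real.log (1 - q^(2*(i+1)))|) ≤ ∑ i ∈ range M, Real.log (1 - q^(2*(i+1))) :=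
    Finset.sum_le_sum (fun i _ => neg_abs_le _)
  rw [Finset.sum_neg_distrib] at h3
  linarith

include hq0 hq1 in
lemma PR_tendsto : Tendsto (PR q) atTop (𝓝 (∏' n : ℕ, (1 - q^(2*(n+1))))) :=
  (mult_num hq0 hq1).hasProd.tendsto_prod_nat

include hq0 hq1 in
lemma E_pos : 0 < ∏' n : ℕ, (1 - q^(2*(n+1))) :=
  lt_of_lt_of_le (Real.exp_pos _) (ge_of_tendsto' (PR_tendsto hq0 hq1) (PR_ge hq0 hq1))

include hq0 hq1 hu in
lemma key_tsum :
    HasSum (fun k : ℕ => (-1:ℝ)^k * q^(k*(k+1)) * (1 + q^(2*k+1)) * (1 - q^(2*k+1)) / Dk q u k)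
      ((∏' n : ℕ, (1 - q^(2*(n+1))))^2 * ∏' n : ℕ, (Dk q u n)⁻¹) := by
  set E := ∏' n : ℕ, (1 - q^(2*(n+1))) with hE
  set cE := Real.exp (-(∑' n : ℕ, |Real.log (1 - q^(2*(n+1)))|)) with hcE
  have hcEpos : 0 < cE := Real.exp_pos _
  have hEpos : 0 < E := E_pos hq0 hq1
  set f₀ : ℕ → ℝ := fun k =>
    (-1:ℝ)^k * q^(k*(k+1)) * (1 + q^(2*k+1)) * (1 - q^(2*k+1)) / Dk q u k with hf₀
  set G : ℕ → ℕ → ℝ := fun N k => if k ≤ N then B q N k / Dk q u k else 0 with hG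
  set bound : ℕ → ℝ := fun k => q^k / (cE*cE) / ((1-q)^2) with hbound
  have hsummable_bound : Summable bound :=
    ((summable_geometric_of_lt_one hq0.le hq1).div_const _).div_const _
  have h_pt : ∀ k, Tendsto (fun N => G N k) atTop (𝓝 (f₀ k / E^2)) := by
    intro k
    have hD := hD_pos hq0 hq1 hu k
    have hPR1 : Tendsto (fun N => PR q (N-k)) atTop (𝓝 E) :=
      (PR_tendsto hq0 hq1).comp (tendsto_sub_atTop_nat k)
    have hPR2 : Tendsto (fun N => PR q (k+N+1)) atTop (𝓝 E) := by
      have h := (PR_tendsto hq0 hq1).comp (tendsto_add_atTop_nat (k+1))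
      exact h.congr (fun N => by simp only [Function.comp]; congr 1; omega)
    have hlim : Tendsto (fun N => ((-1:ℝ)^k * q^(k*(k+1)) * (1 - q^(2*(2*k+1))))
          / (PR q (N-k) * PR q (k+N+1)) / Dk q u k) atTop
        (𝓝 (((-1:ℝ)^k * q^(k*(k+1)) * (1 - q^(2*(2*k+1)))) / (E * E) / Dk q u k)) :=
      (tendsto_const_nhds.div (hPR1.mul hPR2) (mul_pos hEpos hEpos).ne').div_const _
    have hval : ((-1:ℝ)^k * q^(k*(k+1)) * (1 - q^(2*(2*k+1)))) / (E * E) / Dk q u k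
        = f₀ k / E^2 := by
      have hm2 : (1 + q^(2*k+1)) * (1 - q^(2*k+1)) = 1 - q^(2*(2*k+1)) := by
        have h0 : q^(2*(2*k+1)) = (q^(2*k+1))^2 := by rw [← pow_mul]; congr 1; omega
        rw [h0]; ring
      simp only [hf₀]
      rw [show (-1:ℝ)^k * q^(k*(k+1)) * (1 + q^(2*k+1)) * (1 - q^(2*k+1))
        = (-1:ℝ)^k * q^(k*(k+1)) * ((1 + q^(2*k+1)) * (1 - q^(2*k+1))) by ring, hm2]
      rw [div_div, div_div]
      congr 1
      ring
    rw [← hval]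
    apply hlim.congr'
    filter_upwards [eventually_ge_atTop k] with N hN
    simp only [hG]
    rw [if_pos hN, keyCF hq0 hq1 hN]
  have h_bd : ∀ N k, ‖G N k‖ ≤ bound k := by
    intro N k
    rw [Real.norm_eq_abs]
    simp only [hG, hbound]
    split_ifs with h
    · rw [keyCF hq0 hq1 h]
      have hD := hD_pos hq0 hq1 hu k
      have hDg := hD_ge hq0 hq1 hu k
      have hPR1 := PR_pos hq0 hq1 (N-k)
      have hPR2 := PR_pos hq0 hq1 (k+N+1)
      have hq2k : (0:ℝ) < 1 - q^(2*(2*k+1)) := by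
        have := hq_lt_one hq0 hq1 (2*(2*k+1)) (by omega); linarith
      have hnum : |(-1:ℝ)^k * q^(k*(k+1)) * (1 - q^(2*(2*k+1)))| ≤ q^k := by
        rw [abs_mul, abs_mul, abs_pow, abs_neg, abs_one, one_pow, one_mul,
          abs_of_nonneg (by positivity : (0:ℝ) ≤ q^(k*(k+1))), abs_of_pos hq2k]
        have h1 : q^(k*(k+1)) ≤ q^k :=
          pow_le_pow_of_le_one hq0.le hq1.le (Nat.le_mul_of_pos_right k (by omega))
        nlinarith [pow_pos hq0 (k*(k+1)), pow_pos hq0 (2*(2*k+1))]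
      rw [abs_div, abs_div]
      have hPP : cE * cE ≤ |PR q (N-k) * PR q (k+N+1)| := by
        rw [abs_of_pos (mul_pos hPR1 hPR2)]
        exact mul_le_mul (PR_ge hq0 hq1 _) (PR_ge hq0 hq1 _) hcEpos.le hPR1.le
      have hDD : (1-q)^2 ≤ |Dk q u k| := by rw [abs_of_pos hD]; exact hDg
      exact div_le_div₀ (by positivity)
        (div_le_div₀ (by positivity) hnum (by positivity) hPP) (by nlinarith) hDD
    · rw [abs_zero]; positivity
  have tannery := tendsto_tsum_of_dominated_convergence hsummable_bound h_pt
    (Eventually.of_forall h_bd)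
  have heq : ∀ N, ∑' k, G N k = ∏ k ∈ range (N+1), (Dk q u k)⁻¹ := by
    intro N
    rw [tsum_eq_sum (s := range (N+1)) (fun b hb => by
      simp only [hG]; rw [if_neg]; rw [Finset.mem_range] at hb; omega)]
    rw [← keyA hq0 hq1 hu N]
    refine Finset.sum_congr rfl fun k hk => ?_
    simp only [hG]
    rw [Finset.mem_range] at hk
    rw [if_pos (by omega)]
  have hprod : Tendsto (fun N => ∏ k ∈ range (N+1), (Dk q u k)⁻¹) atTop
      (𝓝 (∏' n, (Dk q u n)⁻¹)) :=
    (mult_Dinv hq0 hq1 hu).hasProd.tendsto_prod_nat.comp (tendsto_add_atTop_nat 1)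
  have hkeyval : ∑' k, f₀ k / E^2 = ∏' n, (Dk q u n)⁻¹ :=
    tendsto_nhds_unique (tannery.congr heq) hprod
  have hsumf₀ : Summable f₀ := by
    apply summable_of_geom hq0.le hq1 (C := 2/((1-q)^2))
    intro k
    have hD := hD_pos hq0 hq1 hu k
    have hDg := hD_ge hq0 hq1 hu k
    have hm1 : q^(2*k+1) < 1 := hmlt hq0 hq1 k
    have hm0 : (0:ℝ) < q^(2*k+1) := by positivity
    simp only [hf₀]
    rw [abs_div]
    have hnum : |(-1:ℝ)^k * q^(k*(k+1)) * (1 + q^(2*k+1)) * (1 - q^(2*k+1))| ≤ 2 * q^k := by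
      rw [abs_mul, abs_mul, abs_mul, abs_pow, abs_neg, abs_one, one_pow, one_mul,
        abs_of_nonneg (by positivity : (0:ℝ) ≤ q^(k*(k+1))),
        abs_of_nonneg (by linarith : (0:ℝ) ≤ 1 + q^(2*k+1)),
        abs_of_nonneg (by linarith : (0:ℝ) ≤ 1 - q^(2*k+1))]
      have h1 : q^(k*(k+1)) ≤ q^k :=
        pow_le_pow_of_le_one hq0.le hq1.le (Nat.le_mul_of_pos_right k (by omega))
      nlinarith [mul_le_mul_of_nonneg_left (show 1 - q^(2*k+1) ≤ 1 by linarith)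
          (mul_nonneg (pow_nonneg hq0.le (k*(k+1))) (show (0:ℝ) ≤ 1 + q^(2*k+1) by linarith)),
        mul_le_mul_of_nonneg_right (show (1:ℝ)+q^(2*k+1) ≤ 2 by linarith)
          (pow_nonneg hq0.le (k*(k+1))), pow_pos hq0 (k*(k+1))]
    have hDD : (1-q)^2 ≤ |Dk q u k| := by rw [abs_of_pos hD]; exact hDg
    calc |(-1:ℝ)^k * q^(k*(k+1)) * (1 + q^(2*k+1)) * (1 - q^(2*k+1))| / |Dk q u k|
        ≤ (2 * q^k) / ((1-q)^2) := div_le_div₀ (by positivity) hnum (by nlinarith) hDD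
      _ = 2/((1-q)^2) * q^k := by ring
  have hval2 : ∑' k, f₀ k = E^2 * ∏' n, (Dk q u n)⁻¹ := by
    rw [tsum_div_const] at hkeyval
    rw [div_eq_iff (by positivity : (E:ℝ)^2 ≠ 0)] at hkeyval
    rw [hkeyval]; ring
  exact (Summable.hasSum_iff hsumf₀).mpr hval2


include hq0 hq1 in
lemma den_ne (n : ℕ) : (1 - q^(2*n+1)) ≠ 0 := by
  have := den_lb hq0 hq1 n
  intro hc
  rw [hc] at this
  linarith

end qfacts

end Stmt11

open scoped BigOperators

/-- Ramanujan's theta function `ψ(q) = ∏_{m=1}^∞ (1−q^{2m})/(1−q^{2m−1})`. -/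
noncomputable def psi (q : ℝ) : ℝ :=
  ∏' n : ℕ, (1 - q ^ (2 * (n + 1))) / (1 - q ^ (2 * n + 1))

theorem stmt11 (q : ℝ) (hq0 : 0 < q) (hq1 : q < 1) (t : ℝ) :
    Multipliable (fun n : ℕ =>
      (1 - q ^ (2 * n + 1)) ^ 2 / ((1 - q ^ (2 * n + 1)) ^ 2 + t ^ 2 * q ^ (2 * n + 1))) ∧
    HasSum
      (fun n : ℕ =>
        (-1 : ℝ) ^ n * q ^ (n * (n + 1)) * (1 + q ^ (2 * n + 1)) * (1 - q ^ (2 * n + 1)) /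
          ((1 - q ^ (2 * n + 1)) ^ 2 + t ^ 2 * q ^ (2 * n + 1)))
      (psi q ^ 2 *
        ∏' n : ℕ,
          (1 - q ^ (2 * n + 1)) ^ 2 / ((1 - q ^ (2 * n + 1)) ^ 2 + t ^ 2 * q ^ (2 * n + 1))) := by
  have hu : (0:ℝ) ≤ t^2 := sq_nonneg t
  constructor
  · exact Stmt11.mult_my hq0 hq1 hu
  · have hkey := Stmt11.key_tsum hq0 hq1 hu
    have mnum := Stmt11.mult_num hq0 hq1
    have mden := Stmt11.mult_den hq0 hq1
    have mratio := Stmt11.mult_ratio hq0 hq1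
    have msq := Stmt11.mult_sq hq0 hq1
    have mDinv := Stmt11.mult_Dinv hq0 hq1 hu
    set E := ∏' n : ℕ, (1 - q^(2*(n+1))) with hE
    set F := ∏' n : ℕ, (1 - q^(2*n+1)) with hF
    have h1 : psi q * F = E := by
      rw [psi, hF, hE, ← Multipliable.tprod_mul mratio mden]
      exact tprod_congr fun n => div_mul_cancel₀ _ (Stmt11.den_ne hq0 hq1 n)
    have h2 : (∏' n : ℕ, (1 - q^(2*n+1))^2 / Stmt11.Dk q (t^2) n)
        = (∏' n : ℕ, (1 - q^(2*n+1))^2) * ∏' n : ℕ, (Stmt11.Dk q (t^2) n)⁻¹ := by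
      rw [← Multipliable.tprod_mul msq mDinv]
      exact tprod_congr fun n => div_eq_mul_inv _ _
    have h3 : (∏' n : ℕ, (1 - q^(2*n+1))^2) = F * F := by
      rw [hF, ← Multipliable.tprod_mul mden mden]
      exact tprod_congr fun n => sq _
    have hgoal : psi q ^ 2 * (∏' n : ℕ, (1 - q^(2*n+1))^2 / Stmt11.Dk q (t^2) n)
        = E^2 * ∏' n : ℕ, (Stmt11.Dk q (t^2) n)⁻¹ := by
      rw [h2, h3, ← h1]
      ring
    show HasSum (fun n : ℕ =>
        (-1 : ℝ) ^ n * q ^ (n * (n + 1)) * (1 + q ^ (2 * n + 1)) * (1 - q ^ (2 * n + 1)) /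
          Stmt11.Dk q (t^2) n)
      (psi q ^ 2 * ∏' n : ℕ, (1 - q ^ (2*n+1)) ^ 2 / Stmt11.Dk q (t^2) n)
    rw [hgoal]
    exact hkey
end

section
/- For every real q with 0 < q < 1 and every odd positive integer N, the infinite product ∏_{m odd, m ≥ 1, m ≠ N} (1−q^m)^2 / ((1−q^{m−N})(1−q^{m+N})) converges and ψ(q)^2 · ((1−q^N)^2/q^N) · ∏_{m odd, m ≥ 1, m ≠ N} (1−q^m)^2/((1−q^{m−N})(1−q^{m+N})) = (−1)^{(N−1)/2} q^{(N^2−1)/4 − N} (1−q^{2N}). -/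
open scoped BigOperators
open Real Filter Topology

lemma aux_neg_log_le {q : ℝ} (hq0 : 0 < q) (hq1 : q < 1) (e : ℕ) (he : 1 ≤ e) :
    -Real.log (1 - q ^ e) ≤ q ^ e / (1 - q) := by
  have hlt : q ^ e < 1 := pow_lt_one₀ hq0.le hq1 (by omega)
  have hle : q ^ e ≤ q := by
    simpa using pow_le_pow_of_le_one hq0.le hq1.le he
  have hp : (0:ℝ) < q ^ e := pow_pos hq0 e
  have h1 : (0:ℝ) < 1 - q ^ e := by linarith
  have h2 := Real.log_le_sub_one_of_pos (x := (1 - q ^ e)⁻¹) (by positivity)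
  rw [Real.log_inv] at h2
  have h3 : (1 - q ^ e)⁻¹ - 1 = q ^ e / (1 - q ^ e) := by
    field_simp
    ring
  rw [h3] at h2
  have h4 : q ^ e / (1 - q ^ e) ≤ q ^ e / (1 - q) := by
    apply div_le_div_of_nonneg_left hp.le (by linarith) (by linarith)
  linarith

lemma aux_summable_log {q : ℝ} (hq0 : 0 < q) (hq1 : q < 1) (b : ℕ) (hb : 1 ≤ b) :
    Summable (fun n : ℕ => Real.log (1 - q ^ (2 * n + b))) := by
  have key : Summable (fun n : ℕ => -Real.log (1 - q ^ (2 * n + b))) := by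
    apply Summable.of_nonneg_of_le
    · intro n
      have hlt : q ^ (2*n+b) < 1 := pow_lt_one₀ hq0.le hq1 (by omega)
      have hp : (0:ℝ) < q ^ (2*n+b) := pow_pos hq0 _
      have : Real.log (1 - q ^ (2*n+b)) ≤ 0 :=
        Real.log_nonpos (by linarith) (by linarith)
      linarith
    · intro n
      calc -Real.log (1 - q ^ (2*n+b)) ≤ q ^ (2*n+b) / (1-q) :=
            aux_neg_log_le hq0 hq1 _ (by omega)
        _ ≤ q ^ n * (q ^ b / (1-q)) := by
            rw [mul_div_assoc']
            apply div_le_div_of_nonneg_right ?_ (by linarith)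
            calc q ^ (2*n+b) = q ^ (2*n) * q ^ b := pow_add q (2*n) b
              _ ≤ q ^ n * q ^ b := by
                  have : q ^ (2*n) ≤ q ^ n :=
                    pow_le_pow_of_le_one hq0.le hq1.le (by omega)
                  have hb' : (0:ℝ) ≤ q ^ b := (pow_pos hq0 b).le
                  nlinarith [pow_pos hq0 (2*n)]
    · exact (summable_geometric_of_lt_one hq0.le hq1).mul_right _
  have := key.neg
  simpa using this

lemma aux_hasProd_pos (f : ℕ → ℝ) (hpos : ∀ n, 0 < f n)
    (hs : Summable fun n => Real.log (f n)) :
    HasProd f (∏' n, f n) ∧ 0 < ∏' n, f n := by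
  have h1 : HasProd f (Real.exp (∑' n, Real.log (f n))) := by
    have h := hs.hasSum.rexp
    rwa [show (rexp ∘ fun n => Real.log (f n)) = f from
      funext fun n => Real.exp_log (hpos n)] at h
  refine ⟨h1.multipliable.hasProd, ?_⟩
  rw [h1.tprod_eq]
  exact Real.exp_pos _

noncomputable def auxPod (q : ℝ) (M : ℕ) : ℝ := ∏ n ∈ Finset.range M, (1 - q ^ (2*n+1))
noncomputable def auxPev (q : ℝ) (M : ℕ) : ℝ := ∏ n ∈ Finset.range M, (1 - q ^ (2*n+2))

noncomputable def auxT (q : ℝ) (k : ℕ) (n : ℕ) : ℝ :=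
  (1 - q ^ (2 * n + 1)) ^ 2 /
    ((1 - q ^ ((2 * (n : ℤ) + 1) - ((2 * k + 1 : ℕ) : ℤ))) *
     (1 - q ^ ((2 * (n : ℤ) + 1) + ((2 * k + 1 : ℕ) : ℤ))))

noncomputable def auxF (q : ℝ) (k : ℕ) (n : ℕ) : ℝ := if n = k then 1 else auxT q k n

lemma auxPod_zero (q : ℝ) : auxPod q 0 = 1 := Finset.prod_range_zero _
lemma auxPev_zero (q : ℝ) : auxPev q 0 = 1 := Finset.prod_range_zero _
lemma auxPod_succ (q : ℝ) (M : ℕ) : auxPod q (M+1) = auxPod q M * (1 - q ^ (2*M+1)) :=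
  Finset.prod_range_succ _ M
lemma auxPev_succ (q : ℝ) (M : ℕ) : auxPev q (M+1) = auxPev q M * (1 - q ^ (2*M+2)) :=
  Finset.prod_range_succ _ M

lemma aux_one_sub_pos {q : ℝ} (hq0 : 0 < q) (hq1 : q < 1) (e : ℕ) (he : 1 ≤ e) :
    0 < 1 - q ^ e := by
  have := pow_lt_one₀ hq0.le hq1 (by omega : e ≠ 0); linarith

lemma auxPod_pos {q : ℝ} (hq0 : 0 < q) (hq1 : q < 1) (M : ℕ) : 0 < auxPod q M :=
  Finset.prod_pos fun i _ => aux_one_sub_pos hq0 hq1 _ (by omega)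
lemma auxPev_pos {q : ℝ} (hq0 : 0 < q) (hq1 : q < 1) (M : ℕ) : 0 < auxPev q M :=
  Finset.prod_pos fun i _ => aux_one_sub_pos hq0 hq1 _ (by omega)

lemma auxT_shift (q : ℝ) (k n : ℕ) :
    auxT q k (n + (k+1)) =
      (1 - q ^ (2*n+(2*k+3)))^2 / ((1 - q ^ (2*n+2)) * (1 - q ^ (2*n+(4*k+4)))) := by
  unfold auxT
  rw [show (2 * ((n + (k+1) : ℕ) : ℤ) + 1) - ((2*k+1 : ℕ) : ℤ) = ((2*n+2 : ℕ) : ℤ) by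
    push_cast; ring]
  rw [show (2 * ((n + (k+1) : ℕ) : ℤ) + 1) + ((2*k+1 : ℕ) : ℤ) = ((2*n+(4*k+4) : ℕ) : ℤ) by
    push_cast; ring]
  rw [zpow_natCast, zpow_natCast, show 2*(n+(k+1))+1 = 2*n+(2*k+3) by ring]

lemma auxT_lt (q : ℝ) {k i : ℕ} (hi : i < k) :
    auxT q k i =
      (1 - q ^ (2*i+1))^2 / ((1 - (q ^ (2*(k-i)))⁻¹) * (1 - q ^ (2*i+(2*k+2)))) := by
  unfold auxT
  rw [show (2 * (i : ℤ) + 1) - ((2*k+1 : ℕ) : ℤ) = -((2*(k-i) : ℕ) : ℤ) by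
    push_cast [Nat.cast_sub hi.le]; ring]
  rw [show (2 * (i : ℤ) + 1) + ((2*k+1 : ℕ) : ℤ) = ((2*i+(2*k+2) : ℕ) : ℤ) by
    push_cast; ring]
  rw [zpow_neg, zpow_natCast, zpow_natCast]

lemma auxT_lt' {q : ℝ} (hq0 : 0 < q) (hq1 : q < 1) {k i : ℕ} (hi : i < k) :
    auxT q k i =
      -q ^ (2*(k-i)) * (1 - q ^ (2*i+1))^2 /
        ((1 - q ^ (2*(k-i))) * (1 - q ^ (2*i+(2*k+2)))) := by
  rw [auxT_lt q hi]
  have hx : (0:ℝ) < q ^ (2*(k-i)) := pow_pos hq0 _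
  have h5 : (1 - q ^ (2*(k-i))) ≠ 0 := (aux_one_sub_pos hq0 hq1 _ (by omega)).ne'
  have h2 : (1 - q ^ (2*i+(2*k+2))) ≠ 0 := (aux_one_sub_pos hq0 hq1 _ (by omega)).ne'
  have hxne : q ^ (2*(k-i)) ≠ 0 := hx.ne'
  rw [show (1 - (q ^ (2*(k-i)))⁻¹) = -(1 - q ^ (2*(k-i))) / q ^ (2*(k-i)) by field_simp; ring]
  rw [div_eq_div_iff (mul_ne_zero (div_ne_zero (neg_ne_zero.2 h5) hxne) h2) (mul_ne_zero h5 h2)]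
  field_simp

lemma aux_claim1 {q : ℝ} (hq0 : 0 < q) (hq1 : q < 1) (k : ℕ) :
    ∀ j, j ≤ k → ∏ n ∈ Finset.range j, auxF q k n =
      (-1:ℝ)^j * q^(j*(2*k+1-j)) * (auxPod q j)^2 * auxPev q (k-j) / auxPev q (k+j) := by
  intro j
  induction j with
  | zero =>
      intro _
      simp only [Finset.prod_range_zero, pow_zero, Nat.zero_mul, Nat.sub_zero, auxPod_zero,
        one_mul, mul_one, one_pow, Nat.zero_add, Nat.add_zero]
      exact (div_self (auxPev_pos hq0 hq1 k).ne').symm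
  | succ j ih =>
      intro hjk
      obtain ⟨u, rfl⟩ : ∃ u, k = j + (u+1) := ⟨k - j - 1, by omega⟩
      rw [Finset.prod_range_succ, ih (by omega)]
      rw [show auxF q (j+(u+1)) j = auxT q (j+(u+1)) j from if_neg (by omega),
        auxT_lt' hq0 hq1 (show j < j+(u+1) by omega)]
      rw [show (j+(u+1)) - j = u+1 by omega, show (j+(u+1)) - (j+1) = u by omega,
        show 2*(j+(u+1))+1-(j+1) = j+2*u+2 by omega,
        show 2*(j+(u+1))+1-j = j+2*u+3 by omega,
        show (j+(u+1)) + (j+1) = (j+(u+1)+j) + 1 by omega]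
      rw [auxPev_succ q (j+(u+1)+j), auxPev_succ q u, auxPod_succ, pow_succ (-1:ℝ)]
      rw [show (j+1)*(j+2*u+2) = j*(j+2*u+3) + (2*u+2) by ring,
        pow_add q (j*(j+2*u+3)) (2*u+2)]
      have h2 : (1 - q ^ (2*j+(2*(j+(u+1))+2))) ≠ 0 :=
        (aux_one_sub_pos hq0 hq1 _ (by omega)).ne'
      have h3 : auxPev q u ≠ 0 := (auxPev_pos hq0 hq1 _).ne'
      have h4 : auxPev q (j+(u+1)+j) ≠ 0 := (auxPev_pos hq0 hq1 _).ne'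
      have h6 : (1 - q ^ (2*(j+(u+1)+j)+2)) ≠ 0 :=
        (aux_one_sub_pos hq0 hq1 _ (by omega)).ne'
      have h5 : (1 - q ^ (2*(u+1))) ≠ 0 := (aux_one_sub_pos hq0 hq1 _ (by omega)).ne'
      have h7 : (1 - q ^ (2*u+2)) ≠ 0 := (aux_one_sub_pos hq0 hq1 _ (by omega)).ne'
      field_simp
      ring

lemma aux_claim2 {q : ℝ} (hq0 : 0 < q) (hq1 : q < 1) (k : ℕ) : ∀ s : ℕ,
    ∏ n ∈ Finset.range (k+1+s), auxF q k n =
      (-1:ℝ)^k * q^(k*(k+1)) * (1 - q^(4*k+2)) * (auxPod q (k+1+s))^2 /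
        ((1 - q^(2*k+1))^2 * (auxPev q s * auxPev q (2*k+1+s))) := by
  intro s
  induction s with
  | zero =>
      rw [show k+1+0 = k+1 by omega, Finset.prod_range_succ,
        aux_claim1 hq0 hq1 k k le_rfl,
        show auxF q k k = 1 from if_pos rfl, mul_one]
      rw [show 2*k+1-k = k+1 by omega, show k-k = 0 by omega, auxPev_zero,
        show k+k = 2*k by omega, auxPod_succ]
      rw [show 2*k+1+0 = (2*k)+1 by omega, auxPev_succ]
      have h1 : auxPev q (2*k) ≠ 0 := (auxPev_pos hq0 hq1 _).ne'
      have h2 : (1 - q^(2*k+1)) ≠ 0 := (aux_one_sub_pos hq0 hq1 _ (by omega)).ne'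
      have h3 : (1 - q^(2*(2*k)+2)) ≠ 0 := (aux_one_sub_pos hq0 hq1 _ (by omega)).ne'
      field_simp
      ring
  | succ s ih =>
      rw [show k+1+(s+1) = (k+1+s)+1 by omega, Finset.prod_range_succ, ih]
      rw [show auxF q k (k+1+s) = auxT q k (s+(k+1)) from by
        rw [show k+1+s = s+(k+1) by omega]; exact if_neg (by omega)]
      rw [auxT_shift]
      rw [auxPod_succ, auxPev_succ q s,
        show 2*k+1+(s+1) = (2*k+1+s)+1 by omega, auxPev_succ q (2*k+1+s)]
      have h1 : auxPev q s ≠ 0 := (auxPev_pos hq0 hq1 _).ne'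
      have h2 : auxPev q (2*k+1+s) ≠ 0 := (auxPev_pos hq0 hq1 _).ne'
      have h3 : (1 - q^(2*k+1)) ≠ 0 := (aux_one_sub_pos hq0 hq1 _ (by omega)).ne'
      have h4 : (1 - q^(2*s+2)) ≠ 0 := (aux_one_sub_pos hq0 hq1 _ (by omega)).ne'
      have h5 : (1 - q^(2*s+(4*k+4))) ≠ 0 := (aux_one_sub_pos hq0 hq1 _ (by omega)).ne'
      have h6 : (1 - q^(2*(2*k+1+s)+2)) ≠ 0 := (aux_one_sub_pos hq0 hq1 _ (by omega)).ne'
      have h7 : (1 - q^(2*(k+1+s)+1)) ≠ 0 := (aux_one_sub_pos hq0 hq1 _ (by omega)).ne'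
      field_simp
      ring

/-- the residue computation. The product over odd `m ≠ N` (odd `m`
parametrised as `m = 2n+1` with `2n+1 ≠ N`) of
`(1−q^m)² / ((1−q^{m−N})(1−q^{m+N}))` converges, and
`ψ(q)² ((1−q^N)²/q^N) ∏ = (−1)^{(N−1)/2} q^{(N²−1)/4 − N} (1−q^{2N})`. -/
theorem stmt12 (q : ℝ) (hq0 : 0 < q) (hq1 : q < 1) (N : ℕ) (hN : Odd N) :
    Multipliable (fun n : {n : ℕ // 2 * n + 1 ≠ N} =>
      (1 - q ^ (2 * (n : ℕ) + 1)) ^ 2 /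
        ((1 - q ^ ((2 * ((n : ℕ) : ℤ) + 1) - (N : ℤ))) *
         (1 - q ^ ((2 * ((n : ℕ) : ℤ) + 1) + (N : ℤ))))) ∧
    psi q ^ 2 * ((1 - q ^ N) ^ 2 / q ^ N) *
        ∏' n : {n : ℕ // 2 * n + 1 ≠ N},
          (1 - q ^ (2 * (n : ℕ) + 1)) ^ 2 /
            ((1 - q ^ ((2 * ((n : ℕ) : ℤ) + 1) - (N : ℤ))) *
             (1 - q ^ ((2 * ((n : ℕ) : ℤ) + 1) + (N : ℤ)))) =
      (-1 : ℝ) ^ ((N - 1) / 2) * q ^ ((((N ^ 2 - 1) / 4 : ℕ) : ℤ) - (N : ℤ)) *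
        (1 - q ^ (2 * N)) := by
  obtain ⟨k, hk⟩ := hN
  subst hk
  have hq : q ≠ 0 := hq0.ne'
  obtain ⟨hBprod, hBpos⟩ := aux_hasProd_pos (fun n => 1 - q ^ (2*n+1))
      (fun n => aux_one_sub_pos hq0 hq1 _ (by omega))
      (aux_summable_log hq0 hq1 1 le_rfl)
  obtain ⟨hAprod, hApos⟩ := aux_hasProd_pos (fun n => 1 - q ^ (2*n+2))
      (fun n => aux_one_sub_pos hq0 hq1 _ (by omega))
      (aux_summable_log hq0 hq1 2 (by omega))
  set B := ∏' n : ℕ, (1 - q ^ (2*n+1)) with hBdef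
  set A := ∏' n : ℕ, (1 - q ^ (2*n+2)) with hAdef
  -- psi q = A / B
  have hψpos : ∀ n : ℕ, 0 < (1 - q ^ (2*n+2)) / (1 - q ^ (2*n+1)) := fun n =>
    div_pos (aux_one_sub_pos hq0 hq1 _ (by omega)) (aux_one_sub_pos hq0 hq1 _ (by omega))
  have hψlog : Summable (fun n : ℕ => Real.log ((1 - q ^ (2*n+2)) / (1 - q ^ (2*n+1)))) := by
    refine ((aux_summable_log hq0 hq1 2 (by omega)).sub
      (aux_summable_log hq0 hq1 1 le_rfl)).congr fun n => ?_
    rw [Real.log_div (aux_one_sub_pos hq0 hq1 _ (by omega)).ne'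
      (aux_one_sub_pos hq0 hq1 _ (by omega)).ne']
  obtain ⟨hψprod, -⟩ := aux_hasProd_pos _ hψpos hψlog
  have hψeq : psi q = A / B := by
    have h2 : Tendsto (fun M => ∏ i ∈ Finset.range M, (1 - q ^ (2*i+2)) / (1 - q ^ (2*i+1)))
        atTop (𝓝 (A / B)) := by
      refine ((hAprod.tendsto_prod_nat).div (hBprod.tendsto_prod_nat) hBpos.ne').congr
        fun M => ?_
      exact (Finset.prod_div_distrib _ _).symm
    have h3 : (∏' n : ℕ, (1 - q ^ (2*n+2)) / (1 - q ^ (2*n+1))) = A / B :=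
      tendsto_nhds_unique hψprod.tendsto_prod_nat h2
    rw [show psi q = ∏' n : ℕ, (1 - q ^ (2*n+2)) / (1 - q ^ (2*n+1)) from
      tprod_congr fun n => by rw [show 2*(n+1) = 2*n+2 from by ring], h3]
  -- product of G
  have hGpos : ∀ n : ℕ, 0 <
      (1 - q ^ (2*n+(2*k+3)))^2 / ((1 - q ^ (2*n+2)) * (1 - q ^ (2*n+(4*k+4)))) := fun n =>
    div_pos (pow_pos (aux_one_sub_pos hq0 hq1 _ (by omega)) 2)
      (mul_pos (aux_one_sub_pos hq0 hq1 _ (by omega)) (aux_one_sub_pos hq0 hq1 _ (by omega)))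
  have hGlog : Summable (fun n : ℕ => Real.log
      ((1 - q ^ (2*n+(2*k+3)))^2 / ((1 - q ^ (2*n+2)) * (1 - q ^ (2*n+(4*k+4)))))) := by
    refine (((aux_summable_log hq0 hq1 (2*k+3) (by omega)).mul_left 2).sub
      ((aux_summable_log hq0 hq1 2 (by omega)).add
        (aux_summable_log hq0 hq1 (4*k+4) (by omega)))).congr fun n => ?_
    rw [Real.log_div (pow_ne_zero 2 (aux_one_sub_pos hq0 hq1 _ (by omega)).ne')
        (mul_ne_zero (aux_one_sub_pos hq0 hq1 _ (by omega)).ne'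
          (aux_one_sub_pos hq0 hq1 _ (by omega)).ne'),
      Real.log_mul (aux_one_sub_pos hq0 hq1 _ (by omega)).ne'
        (aux_one_sub_pos hq0 hq1 _ (by omega)).ne',
      Real.log_pow]
    push_cast
    ring
  obtain ⟨hGprod, -⟩ := aux_hasProd_pos _ hGpos hGlog
  set T := ∏' n : ℕ, (1 - q ^ (2*n+(2*k+3)))^2 /
      ((1 - q ^ (2*n+2)) * (1 - q ^ (2*n+(4*k+4)))) with hTdef
  -- HasProd of auxF
  have hFprod : HasProd (auxF q k) ((∏ i ∈ Finset.range (k+1), auxF q k i) * T) := by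
    apply HasProd.prod_range_mul
    rw [show (fun n => auxF q k (n + (k+1))) = (fun n : ℕ =>
        (1 - q ^ (2*n+(2*k+3)))^2 / ((1 - q ^ (2*n+2)) * (1 - q ^ (2*n+(4*k+4))))) from
      funext fun n => by
        rw [show auxF q k (n+(k+1)) = auxT q k (n+(k+1)) from if_neg (by omega), auxT_shift]]
    exact hGprod
  -- limits identifying the value
  have hPodlim : Tendsto (fun s : ℕ => auxPod q (k+1+s)) atTop (𝓝 B) := by
    refine (hBprod.tendsto_prod_nat.comp (tendsto_add_atTop_nat (k+1))).congr fun s => ?_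
    simp only [Function.comp_apply]
    rw [show k+1+s = s+(k+1) from by omega]
    rfl
  have hPevlim : Tendsto (fun s : ℕ => auxPev q s) atTop (𝓝 A) := hAprod.tendsto_prod_nat
  have hPevlim2 : Tendsto (fun s : ℕ => auxPev q (2*k+1+s)) atTop (𝓝 A) := by
    refine (hAprod.tendsto_prod_nat.comp (tendsto_add_atTop_nat (2*k+1))).congr fun s => ?_
    simp only [Function.comp_apply]
    rw [show 2*k+1+s = s+(2*k+1) from by omega]
    rfl
  have hdenne : ((1 - q^(2*k+1))^2 * (A * A)) ≠ 0 :=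
    (mul_pos (pow_pos (aux_one_sub_pos hq0 hq1 _ (by omega)) 2) (mul_pos hApos hApos)).ne'
  have hXlim : Tendsto (fun s : ℕ =>
      (-1:ℝ)^k * q^(k*(k+1)) * (1 - q^(4*k+2)) * (auxPod q (k+1+s))^2 /
        ((1 - q^(2*k+1))^2 * (auxPev q s * auxPev q (2*k+1+s)))) atTop
      (𝓝 ((-1:ℝ)^k * q^(k*(k+1)) * (1 - q^(4*k+2)) * B^2 /
        ((1 - q^(2*k+1))^2 * (A * A)))) := by
    exact Tendsto.div (tendsto_const_nhds.mul (hPodlim.pow 2))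
      (tendsto_const_nhds.mul (hPevlim.mul hPevlim2)) hdenne
  have hc2 : Tendsto (fun s : ℕ => ∏ n ∈ Finset.range (k+1+s), auxF q k n) atTop
      (𝓝 ((∏ i ∈ Finset.range (k+1), auxF q k i) * T)) := by
    refine (hFprod.tendsto_prod_nat.comp (tendsto_add_atTop_nat (k+1))).congr fun s => ?_
    simp only [Function.comp_apply]
    rw [show k+1+s = s+(k+1) from by omega]
  have hceq : (∏ i ∈ Finset.range (k+1), auxF q k i) * T =
      (-1:ℝ)^k * q^(k*(k+1)) * (1 - q^(4*k+2)) * B^2 / ((1 - q^(2*k+1))^2 * (A * A)) :=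
    tendsto_nhds_unique hc2 (hXlim.congr fun s => (aux_claim2 hq0 hq1 k s).symm)
  -- transfer to the subtype
  have hrange : ∀ x : ℕ,
      x ∉ Set.range (fun n : {n : ℕ // 2*n+1 ≠ 2*k+1} => (n : ℕ)) → auxF q k x = 1 := by
    intro x hx
    have hxk : x = k := by
      by_contra h
      exact hx ⟨⟨x, by omega⟩, rfl⟩
    simp [auxF, hxk]
  have hsub : HasProd (fun n : {n : ℕ // 2*n+1 ≠ 2*k+1} => auxF q k (n : ℕ))
      ((∏ i ∈ Finset.range (k+1), auxF q k i) * T) :=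
    (Function.Injective.hasProd_iff Subtype.coe_injective hrange).2 hFprod
  have hfun : (fun n : {n : ℕ // 2*n+1 ≠ 2*k+1} => auxF q k (n : ℕ)) =
      (fun n : {n : ℕ // 2 * n + 1 ≠ 2*k+1} =>
        (1 - q ^ (2 * (n : ℕ) + 1)) ^ 2 /
          ((1 - q ^ ((2 * ((n : ℕ) : ℤ) + 1) - ((2*k+1 : ℕ) : ℤ))) *
           (1 - q ^ ((2 * ((n : ℕ) : ℤ) + 1) + ((2*k+1 : ℕ) : ℤ))))) := by
    funext n
    have hne : (n : ℕ) ≠ k := fun h => n.2 (by rw [h])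
    rw [show auxF q k (n : ℕ) = auxT q k (n : ℕ) from if_neg hne]
    rfl
  rw [hfun] at hsub
  refine ⟨hsub.multipliable, ?_⟩
  rw [hsub.tprod_eq, hψeq, hceq]
  rw [show (2*k+1-1)/2 = k from by omega]
  rw [show ((2*k+1)^2-1)/4 = k*(k+1) from by
    have h : (2*k+1)^2 = 4*(k*(k+1))+1 := by ring
    omega]
  rw [zpow_sub₀ hq, zpow_natCast, zpow_natCast]
  have h1 : (1 - q^(2*k+1)) ≠ 0 := (aux_one_sub_pos hq0 hq1 _ (by omega)).ne'
  have h2 : q^(2*k+1) ≠ 0 := (pow_pos hq0 _).ne'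
  rw [show 2*(2*k+1) = 4*k+2 from by ring]
  field_simp
end

section
/- For every real q with 0 < q < 1 and every real t with |t| < 1−q, one has ∏_{m odd, m ≥ 1} (1−q^m)^2/((1−q^m)^2 + t^2 q^m) = exp( ∑_{k=1}^∞ (−1)^k ζ_q^odd(2k) t^{2k}/k ), where both the infinite product and the exponentiated series converge. -/
open scoped BigOperators

/-- The odd q-zeta value `ζ_q^odd(2k) = ∑_{m odd} q^{mk}/(1-q^m)^{2k}`. -/
noncomputable def qZetaOdd (q : ℝ) (k : ℕ) : ℝ :=
  ∑' n : ℕ, q ^ ((2 * n + 1) * k) / (1 - q ^ (2 * n + 1)) ^ (2 * k)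

set_option maxHeartbeats 1000000 in
theorem stmt13 (q : ℝ) (hq0 : 0 < q) (hq1 : q < 1) (t : ℝ) (ht : |t| < 1 - q) :
    Multipliable (fun n : ℕ =>
      (1 - q ^ (2 * n + 1)) ^ 2 / ((1 - q ^ (2 * n + 1)) ^ 2 + t ^ 2 * q ^ (2 * n + 1))) ∧
    Summable (fun k : ℕ =>
      (-1 : ℝ) ^ (k + 1) * qZetaOdd q (k + 1) * t ^ (2 * (k + 1)) / (k + 1)) ∧
    (∏' n : ℕ,
        (1 - q ^ (2 * n + 1)) ^ 2 / ((1 - q ^ (2 * n + 1)) ^ 2 + t ^ 2 * q ^ (2 * n + 1))) =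
      Real.exp (∑' k : ℕ,
        (-1 : ℝ) ^ (k + 1) * qZetaOdd q (k + 1) * t ^ (2 * (k + 1)) / (k + 1)) := by
  have hqs : 0 < 1 - q := lt_of_le_of_lt (abs_nonneg t) ht
  have habs : t ^ 2 < (1 - q) ^ 2 := by
    calc t ^ 2 = |t| ^ 2 := (sq_abs t).symm
    _ < (1 - q) ^ 2 := by
      apply pow_lt_pow_left₀ ht (abs_nonneg t) two_ne_zero
  have hq1' : ∀ n : ℕ, q ^ (2 * n + 1) ≤ q := fun n => by
    calc q ^ (2 * n + 1) ≤ q ^ 1 := pow_le_pow_of_le_one hq0.le hq1.le (by omega)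
    _ = q := pow_one q
  have hqpos : ∀ n : ℕ, 0 < q ^ (2 * n + 1) := fun n => pow_pos hq0 _
  have hd : ∀ n : ℕ, 1 - q ≤ 1 - q ^ (2 * n + 1) := fun n => by linarith [hq1' n]
  have hdpos : ∀ n : ℕ, 0 < 1 - q ^ (2 * n + 1) := fun n => lt_of_lt_of_le hqs (hd n)
  set a : ℕ → ℝ := fun n => t ^ 2 * q ^ (2 * n + 1) / (1 - q ^ (2 * n + 1)) ^ 2 with ha
  have hA0 : ∀ n, 0 ≤ a n := fun n =>
    div_nonneg (mul_nonneg (sq_nonneg t) (hqpos n).le) (sq_nonneg _)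
  have hAle : ∀ n, a n ≤ q ^ (2 * n + 1) := by
    intro n
    have h1 : t ^ 2 ≤ (1 - q ^ (2 * n + 1)) ^ 2 :=
      le_trans habs.le (pow_le_pow_left₀ hqs.le (hd n) 2)
    rw [ha]
    rw [div_le_iff₀ (pow_pos (hdpos n) 2)]
    nlinarith [(hqpos n).le]
  have hAq : ∀ n, a n ≤ q := fun n => (hAle n).trans (hq1' n)
  have hA1 : ∀ n, a n < 1 := fun n => lt_of_le_of_lt (hAq n) hq1
  set F : ℕ × ℕ → ℝ := fun p => (-1 : ℝ) ^ (p.1 + 1) * (a p.2) ^ (p.1 + 1) / (p.1 + 1) with hFdef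
  -- geometric summability
  have hgeo : Summable (fun n : ℕ => q ^ (2 * n + 1)) := by
    have h2 : Summable (fun n : ℕ => (q ^ 2) ^ n * q) :=
      (summable_geometric_of_lt_one (by positivity) (by nlinarith)).mul_right q
    apply h2.congr
    intro n
    rw [← pow_mul, ← pow_succ]
  have hgq : Summable (fun k : ℕ => q ^ k) := summable_geometric_of_lt_one hq0.le hq1
  -- summability of F on ℕ × ℕ
  have hFabs : Summable (fun p : ℕ × ℕ => |F p|) := by
    have hb : Summable (fun p : ℕ × ℕ => q ^ p.1 * q ^ (2 * p.2 + 1)) :=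
      hgq.mul_of_nonneg hgeo (fun k => pow_nonneg hq0.le k) (fun n => (hqpos n).le)
    apply Summable.of_nonneg_of_le (fun p => abs_nonneg _) ?_ hb
    intro p
    obtain ⟨k, n⟩ := p
    have h1 : |F (k, n)| = a n ^ (k + 1) / ((k : ℝ) + 1) := by
      rw [hFdef, abs_div, abs_mul, abs_pow, abs_pow, abs_neg, abs_one, one_pow, one_mul,
        abs_of_nonneg (hA0 n), abs_of_nonneg (show (0:ℝ) ≤ (k : ℝ) + 1 by positivity)]
    rw [h1]
    calc a n ^ (k + 1) / ((k : ℝ) + 1) ≤ a n ^ (k + 1) :=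
          div_le_self (pow_nonneg (hA0 n) _) (by simp)
    _ = a n ^ k * a n := pow_succ (a n) k
    _ ≤ q ^ k * q ^ (2 * n + 1) := by
        apply mul_le_mul (pow_le_pow_left₀ (hA0 n) (hAq n) k) (hAle n) (hA0 n)
          (pow_nonneg hq0.le k)
  have hF : Summable F := hFabs.of_abs
  -- pointwise power identity
  have hpow : ∀ n k : ℕ, a n ^ (k + 1) =
      t ^ (2 * (k + 1)) * (q ^ ((2 * n + 1) * (k + 1)) / (1 - q ^ (2 * n + 1)) ^ (2 * (k + 1))) := by
    intro n k
    rw [ha]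
    rw [div_pow, mul_pow, ← pow_mul, ← pow_mul, ← pow_mul, mul_div_assoc]
  -- fiberwise sums over n, for each k
  have hFk : ∀ k : ℕ, HasSum (fun n => F (k, n))
      ((-1 : ℝ) ^ (k + 1) * qZetaOdd q (k + 1) * t ^ (2 * (k + 1)) / (k + 1)) := by
    intro k
    have hcs : Summable (fun n : ℕ =>
        q ^ ((2 * n + 1) * (k + 1)) / (1 - q ^ (2 * n + 1)) ^ (2 * (k + 1))) := by
      have hb : Summable (fun n : ℕ => q ^ (2 * n + 1) * ((1 - q) ^ (2 * (k + 1)))⁻¹) :=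
        hgeo.mul_right _
      apply Summable.of_nonneg_of_le
        (fun n => div_nonneg (pow_nonneg hq0.le _) (pow_nonneg (hdpos n).le _)) ?_ hb
      intro n
      rw [← div_eq_mul_inv]
      apply div_le_div₀ (pow_nonneg hq0.le _)
      · exact pow_le_pow_of_le_one hq0.le hq1.le (Nat.le_mul_of_pos_right _ (by omega))
      · positivity
      · exact pow_le_pow_left₀ hqs.le (hd n) _
    have hZ : HasSum (fun n : ℕ => q ^ ((2 * n + 1) * (k + 1)) / (1 - q ^ (2 * n + 1)) ^ (2 * (k + 1))) (qZetaOdd q (k + 1)) := by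
      rw [qZetaOdd]; exact hcs.hasSum
    have h2 := hZ.mul_left ((-1 : ℝ) ^ (k + 1) * t ^ (2 * (k + 1)) / ((k : ℝ) + 1))
    have h3 : ((-1 : ℝ) ^ (k + 1) * t ^ (2 * (k + 1)) / ((k : ℝ) + 1)) * qZetaOdd q (k + 1)
        = (-1 : ℝ) ^ (k + 1) * qZetaOdd q (k + 1) * t ^ (2 * (k + 1)) / (k + 1) := by ring
    rw [h3] at h2
    have heq : (fun n : ℕ => F (k, n)) = fun n : ℕ =>
        ((-1 : ℝ) ^ (k + 1) * t ^ (2 * (k + 1)) / ((k : ℝ) + 1)) *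
          (q ^ ((2 * n + 1) * (k + 1)) / (1 - q ^ (2 * n + 1)) ^ (2 * (k + 1))) := by
      funext n
      rw [hFdef]
      simp only
      rw [hpow n k]
      ring
    rw [heq]
    exact h2
  -- sum over k of fiberwise sums
  have hG : HasSum (fun k : ℕ =>
      (-1 : ℝ) ^ (k + 1) * qZetaOdd q (k + 1) * t ^ (2 * (k + 1)) / (k + 1)) (∑' p, F p) :=
    hF.hasSum.prod_fiberwise hFk
  -- fiberwise sums over k, for each n
  have hLn : ∀ n : ℕ, HasSum (fun k => F (k, n)) (-Real.log (1 + a n)) := by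
    intro n
    have habs' : |(-(a n))| < 1 := by
      rw [abs_neg, abs_of_nonneg (hA0 n)]; exact hA1 n
    have h := Real.hasSum_pow_div_log_of_abs_lt_one habs'
    rw [sub_neg_eq_add] at h
    have heq : (fun k : ℕ => F (k, n)) = fun k : ℕ => (-(a n)) ^ (k + 1) / ((k : ℝ) + 1) := by
      funext k
      rw [hFdef]
      simp only
      rw [neg_pow]
      ring
    rw [heq]
    exact h
  have hL : HasSum (fun n => -Real.log (1 + a n)) (∑' p : ℕ × ℕ, F p.swap) :=
    hF.prod_symm.hasSum.prod_fiberwise hLn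
  have hswap : (∑' p : ℕ × ℕ, F p.swap) = ∑' p, F p := Equiv.tsum_eq (Equiv.prodComm ℕ ℕ) F
  -- the product terms
  have hfpos : ∀ n : ℕ, 0 < (1 - q ^ (2 * n + 1)) ^ 2 /
      ((1 - q ^ (2 * n + 1)) ^ 2 + t ^ 2 * q ^ (2 * n + 1)) := by
    intro n
    apply div_pos (pow_pos (hdpos n) 2)
    have := (hqpos n).le
    nlinarith [sq_nonneg t, (hdpos n)]
  have hterm : ∀ n : ℕ, (1 - q ^ (2 * n + 1)) ^ 2 /
      ((1 - q ^ (2 * n + 1)) ^ 2 + t ^ 2 * q ^ (2 * n + 1)) = (1 + a n)⁻¹ := by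
    intro n
    have hdne : (1 - q ^ (2 * n + 1)) ^ 2 ≠ 0 := pow_ne_zero 2 (hdpos n).ne'
    have hden : (1 - q ^ (2 * n + 1)) ^ 2 + t ^ 2 * q ^ (2 * n + 1) ≠ 0 := by
      have := (hqpos n).le
      nlinarith [sq_nonneg t, hdpos n]
    rw [ha]
    field_simp
    rw [mul_add, mul_one, mul_div_cancel₀ _ hdne]
  have hlogterm : ∀ n : ℕ, Real.log ((1 - q ^ (2 * n + 1)) ^ 2 /
      ((1 - q ^ (2 * n + 1)) ^ 2 + t ^ 2 * q ^ (2 * n + 1))) = -Real.log (1 + a n) := by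
    intro n
    rw [hterm n, Real.log_inv]
  have hSummableLog : Summable (fun n : ℕ => Real.log ((1 - q ^ (2 * n + 1)) ^ 2 /
      ((1 - q ^ (2 * n + 1)) ^ 2 + t ^ 2 * q ^ (2 * n + 1)))) :=
    hL.summable.congr (fun n => (hlogterm n).symm)
  have hMult : Multipliable (fun n : ℕ =>
      (1 - q ^ (2 * n + 1)) ^ 2 / ((1 - q ^ (2 * n + 1)) ^ 2 + t ^ 2 * q ^ (2 * n + 1))) :=
    Real.multipliable_of_summable_log hfpos hSummableLog
  have hprod := Real.rexp_tsum_eq_tprod hfpos hSummableLog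
  refine ⟨hMult, hG.summable, ?_⟩
  rw [← hprod]
  try simp only [Function.comp_def]
  congr 1
  rw [tsum_congr hlogterm, hL.tsum_eq, hswap, hG.tsum_eq]
end

section
/- The Ramanujan theta function satisfies lim_{q→1⁻} (1−q) ψ(q)^2 = π/2. -/
open scoped BigOperators Topology
open Real

namespace Stmt16Aux

open Filter Finset

/-- The Wallis factor, matching `Real.Wallis.W`. -/
noncomputable def Wf (n : ℕ) : ℝ := (2 * n + 2) / (2 * n + 1) * ((2 * n + 2) / (2 * n + 3))

/-- The factor in the product defining `psi`. -/
noncomputable def pf (q : ℝ) (n : ℕ) : ℝ := (1 - q ^ (2 * (n + 1))) / (1 - q ^ (2 * n + 1))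

/-- The Wallis-like factor appearing after telescoping. -/
noncomputable def af (q : ℝ) (n : ℕ) : ℝ :=
  (1 - q ^ (2 * n + 2)) ^ 2 / ((1 - q ^ (2 * n + 1)) * (1 - q ^ (2 * n + 3)))

lemma W_eq (k : ℕ) : Real.Wallis.W k = ∏ n ∈ range k, Wf n := rfl

variable {q : ℝ}

lemma sub_pow_pos (h0 : 0 < q) (h1 : q < 1) {j : ℕ} (hj : j ≠ 0) : 0 < 1 - q ^ j := by
  have : q ^ j < 1 := pow_lt_one₀ h0.le h1 hj
  linarith

lemma one_sub_pow_eq (q : ℝ) (j : ℕ) :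
    1 - q ^ j = (∑ i ∈ range j, q ^ i) * (1 - q) := by
  have h := geom_sum_mul q j
  linear_combination h

/-- Cauchy–Schwarz: `(∑_{i<k} q^i)^2 ≥ k^2 q^{k-1}` for `q ≥ 0`. -/
lemma sq_sum_ge (h0 : 0 ≤ q) (k : ℕ) :
    (k : ℝ) ^ 2 * q ^ (k - 1) ≤ (∑ i ∈ range k, q ^ i) ^ 2 := by
  have key := Finset.sum_mul_sq_le_sq_mul_sq (range k)
      (fun i => Real.sqrt (q ^ i)) (fun i => Real.sqrt (q ^ (k - 1 - i)))
  have h1 : ∀ i ∈ range k, Real.sqrt (q ^ i) * Real.sqrt (q ^ (k - 1 - i))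
      = Real.sqrt (q ^ (k - 1)) := by
    intro i hi
    rw [← Real.sqrt_mul (pow_nonneg h0 _), ← pow_add]
    congr 2
    have := mem_range.mp hi
    omega
  have h2 : ∀ i ∈ range k, Real.sqrt (q ^ i) ^ 2 = q ^ i := fun i _ =>
    Real.sq_sqrt (pow_nonneg h0 _)
  have h3 : ∀ i ∈ range k, Real.sqrt (q ^ (k - 1 - i)) ^ 2 = q ^ (k - 1 - i) := fun i _ =>
    Real.sq_sqrt (pow_nonneg h0 _)
  rw [Finset.sum_congr rfl h1, Finset.sum_congr rfl h2, Finset.sum_congr rfl h3,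
    Finset.sum_const, card_range, nsmul_eq_mul] at key
  have h4 : ∑ i ∈ range k, q ^ (k - 1 - i) = ∑ i ∈ range k, q ^ i :=
    Finset.sum_range_reflect (fun i => q ^ i) k
  rw [h4, ← sq] at key
  calc (k : ℝ) ^ 2 * q ^ (k - 1) = ((k : ℝ) * Real.sqrt (q ^ (k - 1))) ^ 2 := by
        rw [mul_pow, Real.sq_sqrt (pow_nonneg h0 _)]
    _ ≤ _ := key

lemma one_le_af (h0 : 0 < q) (h1 : q < 1) (n : ℕ) : 1 ≤ af q n := by
  have hd1 : 0 < 1 - q ^ (2 * n + 1) := sub_pow_pos h0 h1 (by omega)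
  have hd3 : 0 < 1 - q ^ (2 * n + 3) := sub_pow_pos h0 h1 (by omega)
  rw [af, le_div_iff₀ (by positivity)]
  have e2 : q ^ (2 * n + 2) = q ^ (2 * n + 1) * q := by ring
  have e3 : q ^ (2 * n + 3) = q ^ (2 * n + 1) * q ^ 2 := by ring
  rw [e2, e3]
  have hy : (0 : ℝ) ≤ q ^ (2 * n + 1) := by positivity
  nlinarith [mul_nonneg hy (sq_nonneg (1 - q))]

lemma af_le_Wf (h0 : 0 < q) (h1 : q < 1) (n : ℕ) : af q n ≤ Wf n := by
  have hd1 : 0 < 1 - q ^ (2 * n + 1) := sub_pow_pos h0 h1 (by omega)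
  have hd3 : 0 < 1 - q ^ (2 * n + 3) := sub_pow_pos h0 h1 (by omega)
  have hW : Wf n = (2 * (n : ℝ) + 2) ^ 2 / ((2 * (n : ℝ) + 1) * (2 * (n : ℝ) + 3)) := by
    rw [Wf, div_mul_div_comm]; ring_nf
  rw [af, hW, div_le_div_iff₀ (by positivity) (by positivity)]
  -- key: (1 - q^(2n+2))^2 ≥ (2n+2)^2 q^(2n+1) (1-q)^2
  have hS := sq_sum_ge h0.le (2 * n + 2)
  have hidx : 2 * n + 2 - 1 = 2 * n + 1 := by omega
  rw [hidx] at hS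
  have hgeom : 1 - q ^ (2 * n + 2) = (∑ i ∈ range (2 * n + 2), q ^ i) * (1 - q) :=
    one_sub_pow_eq q (2 * n + 2)
  have hkey : ((2 * n + 2 : ℕ) : ℝ) ^ 2 * q ^ (2 * n + 1) * (1 - q) ^ 2
      ≤ (1 - q ^ (2 * n + 2)) ^ 2 := by
    rw [hgeom, mul_pow]
    have := mul_le_mul_of_nonneg_right hS (sq_nonneg (1 - q))
    linarith
  push_cast at hkey
  have e2 : q ^ (2 * n + 2) = q ^ (2 * n + 1) * q := by ring
  have e3 : q ^ (2 * n + 3) = q ^ (2 * n + 1) * q ^ 2 := by ring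
  rw [e2] at hkey ⊢
  rw [e3]
  nlinarith [hkey]

lemma pf_pos (h0 : 0 < q) (h1 : q < 1) (n : ℕ) : 0 < pf q n := by
  have hd1 : 0 < 1 - q ^ (2 * n + 1) := sub_pow_pos h0 h1 (by omega)
  have hd2 : 0 < 1 - q ^ (2 * (n + 1)) := sub_pow_pos h0 h1 (by omega)
  exact div_pos hd2 hd1

lemma one_le_pf (h0 : 0 < q) (h1 : q < 1) (n : ℕ) : 1 ≤ pf q n := by
  have hd1 : 0 < 1 - q ^ (2 * n + 1) := sub_pow_pos h0 h1 (by omega)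
  rw [pf, le_div_iff₀ hd1, one_mul]
  have : q ^ (2 * (n + 1)) ≤ q ^ (2 * n + 1) :=
    pow_le_pow_of_le_one h0.le h1.le (by omega)
  linarith

lemma pf_le (h0 : 0 < q) (h1 : q < 1) (n : ℕ) : pf q n ≤ 1 + q ^ (2 * n + 1) := by
  have hd1 : 0 < 1 - q ^ (2 * n + 1) := sub_pow_pos h0 h1 (by omega)
  rw [pf, div_le_iff₀ hd1]
  have e : q ^ (2 * (n + 1)) = q ^ (2 * n + 1) * q := by ring
  rw [e]
  have hy : (0 : ℝ) < q ^ (2 * n + 1) := by positivity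
  have hyq : q ^ (2 * n + 1) ≤ q := by
    calc q ^ (2 * n + 1) ≤ q ^ 1 := pow_le_pow_of_le_one h0.le h1.le (by omega)
      _ = q := pow_one q
  nlinarith [mul_le_mul_of_nonneg_left hyq hy.le]

/-- Telescoping identity. -/
lemma prod_identity (h0 : 0 < q) (h1 : q < 1) (N : ℕ) :
    (1 - q) * (∏ n ∈ range N, pf q n) ^ 2
      = (1 - q ^ (2 * N + 1)) * ∏ n ∈ range N, af q n := by
  induction N with
  | zero => simp
  | succ N ih =>
    have hd1 : (1 - q ^ (2 * N + 1)) ≠ 0 := (sub_pow_pos h0 h1 (by omega)).ne'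
    have hd3 : (1 - q ^ (2 * N + 3)) ≠ 0 := (sub_pow_pos h0 h1 (by omega)).ne'
    have step : (1 - q ^ (2 * N + 1)) * (pf q N) ^ 2
        = (1 - q ^ (2 * (N + 1) + 1)) * af q N := by
      rw [pf, af]
      field_simp
      ring
    calc (1 - q) * (∏ n ∈ range (N + 1), pf q n) ^ 2
        = ((1 - q) * (∏ n ∈ range N, pf q n) ^ 2) * (pf q N) ^ 2 := by
          rw [prod_range_succ]; ring
      _ = ((1 - q ^ (2 * N + 1)) * ∏ n ∈ range N, af q n) * (pf q N) ^ 2 := by rw [ih]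
      _ = (∏ n ∈ range N, af q n) * ((1 - q ^ (2 * N + 1)) * (pf q N) ^ 2) := by ring
      _ = (∏ n ∈ range N, af q n) * ((1 - q ^ (2 * (N + 1) + 1)) * af q N) := by rw [step]
      _ = (1 - q ^ (2 * (N + 1) + 1)) * ∏ n ∈ range (N + 1), af q n := by
          rw [prod_range_succ]; ring

lemma one_le_prod_real {s : Finset ℕ} {f : ℕ → ℝ} (h : ∀ i ∈ s, 1 ≤ f i) :
    1 ≤ ∏ i ∈ s, f i := by
  calc (1 : ℝ) = ∏ _i ∈ s, 1 := by simp
    _ ≤ ∏ i ∈ s, f i := Finset.prod_le_prod (by intro i _; norm_num) h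

lemma multipliable_pf (h0 : 0 < q) (h1 : q < 1) : Multipliable (pf q) := by
  have hmono : Monotone (fun s : Finset ℕ => ∏ i ∈ s, pf q i) := by
    intro s t hst
    have h1' : (1 : ℝ) ≤ ∏ i ∈ t \ s, pf q i :=
      one_le_prod_real fun i _ => one_le_pf h0 h1 i
    have h2' : (0 : ℝ) ≤ ∏ i ∈ s, pf q i :=
      Finset.prod_nonneg fun i _ => (pf_pos h0 h1 i).le
    calc ∏ i ∈ s, pf q i = 1 * ∏ i ∈ s, pf q i := (one_mul _).symm
      _ ≤ (∏ i ∈ t \ s, pf q i) * ∏ i ∈ s, pf q i := by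
          exact mul_le_mul_of_nonneg_right h1' h2'
      _ = ∏ i ∈ t, pf q i := Finset.prod_sdiff hst
  have hq2 : q ^ 2 < 1 := by nlinarith
  have hsummable : Summable (fun i : ℕ => q ^ (2 * i + 1)) := by
    have : Summable (fun i : ℕ => q * (q ^ 2) ^ i) :=
      (summable_geometric_of_lt_one (by positivity) hq2).mul_left q
    refine this.congr fun i => ?_
    rw [← pow_mul]; ring
  have hbdd : ∀ s : Finset ℕ, ∏ i ∈ s, pf q i ≤ Real.exp (∑' i : ℕ, q ^ (2 * i + 1)) := by
    intro s
    calc ∏ i ∈ s, pf q i ≤ ∏ i ∈ s, Real.exp (q ^ (2 * i + 1)) := by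
          refine Finset.prod_le_prod (fun i _ => (pf_pos h0 h1 i).le) fun i _ => ?_
          have := Real.add_one_le_exp (q ^ (2 * i + 1))
          have := pf_le h0 h1 i
          linarith
      _ = Real.exp (∑ i ∈ s, q ^ (2 * i + 1)) := (Real.exp_sum s _).symm
      _ ≤ Real.exp (∑' i : ℕ, q ^ (2 * i + 1)) := by
          apply Real.exp_le_exp.mpr
          exact Summable.sum_le_tsum s (fun i _ => by positivity) hsummable
  have hne : (Set.range fun s : Finset ℕ => ∏ i ∈ s, pf q i).Nonempty :=
    ⟨_, ⟨∅, rfl⟩⟩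
  have hbdd' : BddAbove (Set.range fun s : Finset ℕ => ∏ i ∈ s, pf q i) := by
    refine ⟨Real.exp (∑' i : ℕ, q ^ (2 * i + 1)), ?_⟩
    rintro x ⟨s, rfl⟩
    exact hbdd s
  exact ⟨_, tendsto_atTop_isLUB hmono (isLUB_csSup hne hbdd')⟩

lemma sum_pos_range {j : ℕ} (h0 : 0 < q) (hj : j ≠ 0) :
    0 < ∑ i ∈ range j, q ^ i :=
  Finset.sum_pos (fun i _ => pow_pos h0 i) (nonempty_range_iff.mpr hj)

lemma tendsto_sum_range (j : ℕ) :
    Tendsto (fun q : ℝ => ∑ i ∈ range j, q ^ i) (𝓝[<] (1 : ℝ)) (𝓝 (j : ℝ)) := by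
  have hc : Continuous fun q : ℝ => ∑ i ∈ range j, q ^ i :=
    continuous_finset_sum _ fun i _ => continuous_pow i
  have h := hc.tendsto 1
  have hval : ∑ i ∈ range j, (1 : ℝ) ^ i = (j : ℝ) := by simp
  rw [hval] at h
  exact h.mono_left nhdsWithin_le_nhds

lemma tendsto_af (n : ℕ) : Tendsto (fun q : ℝ => af q n) (𝓝[<] (1 : ℝ)) (𝓝 (Wf n)) := by
  have hmem : Set.Ioo (0 : ℝ) 1 ∈ 𝓝[<] (1 : ℝ) :=
    Ioo_mem_nhdsLT_of_mem (by norm_num : (1 : ℝ) ∈ Set.Ioc (0 : ℝ) 1)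
  have heq : ∀ q ∈ Set.Ioo (0 : ℝ) 1,
      (∑ i ∈ range (2 * n + 2), q ^ i) ^ 2
        / ((∑ i ∈ range (2 * n + 1), q ^ i) * (∑ i ∈ range (2 * n + 3), q ^ i))
      = af q n := by
    intro q hq
    have hq1 : (1 : ℝ) - q ≠ 0 := by have := hq.2; intro h; linarith [sub_eq_zero.mp h]
    have hS1 : (0 : ℝ) < ∑ i ∈ range (2 * n + 1), q ^ i := sum_pos_range hq.1 (by omega)
    have hS3 : (0 : ℝ) < ∑ i ∈ range (2 * n + 3), q ^ i := sum_pos_range hq.1 (by omega)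
    rw [af, one_sub_pow_eq q (2 * n + 2), one_sub_pow_eq q (2 * n + 1),
      one_sub_pow_eq q (2 * n + 3)]
    field_simp
  have hne : ((2 * (n : ℝ) + 1) * (2 * (n : ℝ) + 3)) ≠ 0 := by positivity
  have hdiv : Tendsto (fun q : ℝ =>
      (∑ i ∈ range (2 * n + 2), q ^ i) ^ 2
        / ((∑ i ∈ range (2 * n + 1), q ^ i) * (∑ i ∈ range (2 * n + 3), q ^ i)))
      (𝓝[<] (1 : ℝ)) (𝓝 (Wf n)) := by
    have h2 := (tendsto_sum_range (2 * n + 2)).pow 2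
    have h13 := (tendsto_sum_range (2 * n + 1)).mul (tendsto_sum_range (2 * n + 3))
    have hd := h2.div h13 (by push_cast; exact hne)
    have hWval : (((2 * n + 2 : ℕ) : ℝ)) ^ 2 / (((2 * n + 1 : ℕ) : ℝ) * ((2 * n + 3 : ℕ) : ℝ))
        = Wf n := by
      rw [Wf]
      push_cast
      rw [div_mul_div_comm]
      ring_nf
    rw [hWval] at hd
    exact hd
  refine hdiv.congr' ?_
  filter_upwards [hmem] with q hq
  exact heq q hq

end Stmt16Aux

open Stmt16Aux Filter Finset

theorem stmt16 :
    Filter.Tendsto (fun q : ℝ => (1 - q) * psi q ^ 2) (𝓝[<] (1 : ℝ)) (𝓝 (π / 2)) := by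
  have hmem : Set.Ioo (0 : ℝ) 1 ∈ 𝓝[<] (1 : ℝ) :=
    Ioo_mem_nhdsLT_of_mem (by norm_num : (1 : ℝ) ∈ Set.Ioc (0 : ℝ) 1)
  -- the limit of the partial-product expression, for fixed q
  have hc : ∀ q : ℝ, 0 < q → q < 1 →
      Tendsto (fun M : ℕ => (1 - q ^ (2 * M + 1)) * ∏ n ∈ range M, af q n)
        atTop (𝓝 ((1 - q) * psi q ^ 2)) := by
    intro q h0 h1
    have hmul := multipliable_pf h0 h1
    have hpsi : Tendsto (fun N : ℕ => ∏ n ∈ range N, pf q n) atTop (𝓝 (psi q)) :=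
      hmul.hasProd.tendsto_prod_nat
    have h2 : Tendsto (fun M : ℕ => (1 - q) * (∏ n ∈ range M, pf q n) ^ 2)
        atTop (𝓝 ((1 - q) * psi q ^ 2)) := ((hpsi.pow 2).const_mul _)
    exact h2.congr fun M => prod_identity h0 h1 M
  rw [tendsto_order]
  constructor
  · -- lower bound
    intro l hl
    obtain ⟨N, hN⟩ : ∃ N, l < ∏ n ∈ range N, Wf n := by
      have h := Real.Wallis.tendsto_W_nhds_pi_div_two
      have := (h.eventually (lt_mem_nhds hl)).exists
      obtain ⟨N, hN⟩ := this
      exact ⟨N, by rwa [W_eq] at hN⟩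
    have hPt : Tendsto (fun q : ℝ => ∏ n ∈ range N, af q n) (𝓝[<] (1 : ℝ))
        (𝓝 (∏ n ∈ range N, Wf n)) :=
      tendsto_finset_prod _ fun n _ => tendsto_af n
    filter_upwards [hPt.eventually (lt_mem_nhds hN), hmem] with q hql hq
    obtain ⟨h0, h1⟩ := hq
    refine hql.trans_le ?_
    -- show  ∏_{n<N} af q n ≤ (1-q) * psi q ^ 2
    have hgeo : Tendsto (fun M : ℕ => q ^ (2 * M + 1)) atTop (𝓝 0) := by
      have hq2 : Tendsto (fun M : ℕ => q ^ M) atTop (𝓝 0) :=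
        tendsto_pow_atTop_nhds_zero_of_lt_one h0.le h1
      have htop : Tendsto (fun M : ℕ => 2 * M + 1) atTop atTop :=
        Filter.tendsto_atTop_atTop_of_monotone (fun a b h => by omega) fun b => ⟨b, by omega⟩
      exact hq2.comp htop
    have hd : Tendsto (fun M : ℕ => (1 - q ^ (2 * M + 1)) * ∏ n ∈ range N, af q n)
        atTop (𝓝 (∏ n ∈ range N, af q n)) := by
      have hsub := hgeo.const_sub (1 : ℝ)
      have := hsub.mul_const (∏ n ∈ range N, af q n)
      simpa using this
    refine le_of_tendsto_of_tendsto hd (hc q h0 h1) ?_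
    filter_upwards [eventually_ge_atTop N] with M hM
    have hfac : (0 : ℝ) ≤ 1 - q ^ (2 * M + 1) :=
      (sub_pow_pos h0 h1 (by omega)).le
    have hprodle : ∏ n ∈ range N, af q n ≤ ∏ n ∈ range M, af q n := by
      rw [← Finset.prod_range_mul_prod_Ico (af q) hM]
      have h1' : (1 : ℝ) ≤ ∏ n ∈ Ico N M, af q n := by
        calc (1 : ℝ) = ∏ _n ∈ Ico N M, 1 := by simp
          _ ≤ ∏ n ∈ Ico N M, af q n :=
            Finset.prod_le_prod (by intro i _; norm_num) fun i _ => one_le_af h0 h1 i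
      have h2' : (0 : ℝ) ≤ ∏ n ∈ range N, af q n :=
        Finset.prod_nonneg fun i _ => le_trans zero_le_one (one_le_af h0 h1 i)
      nlinarith
    exact mul_le_mul_of_nonneg_left hprodle hfac
  · -- upper bound
    intro u hu
    filter_upwards [hmem] with q hq
    obtain ⟨h0, h1⟩ := hq
    have hle : (1 - q) * psi q ^ 2 ≤ π / 2 := by
      refine le_of_tendsto' (hc q h0 h1) fun M => ?_
      have hfac0 : (0 : ℝ) ≤ 1 - q ^ (2 * M + 1) := (sub_pow_pos h0 h1 (by omega)).le
      have hfac1 : 1 - q ^ (2 * M + 1) ≤ 1 := by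
        have : (0 : ℝ) ≤ q ^ (2 * M + 1) := by positivity
        linarith
      have hprod0 : (0 : ℝ) ≤ ∏ n ∈ range M, af q n :=
        Finset.prod_nonneg fun i _ => le_trans zero_le_one (one_le_af h0 h1 i)
      have hprodW : ∏ n ∈ range M, af q n ≤ ∏ n ∈ range M, Wf n :=
        Finset.prod_le_prod (fun i _ => le_trans zero_le_one (one_le_af h0 h1 i))
          fun i _ => af_le_Wf h0 h1 i
      have hWle : ∏ n ∈ range M, Wf n ≤ π / 2 := by
        rw [← W_eq]; exact Real.Wallis.W_le M
      calc (1 - q ^ (2 * M + 1)) * ∏ n ∈ range M, af q n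
          ≤ 1 * ∏ n ∈ range M, af q n := mul_le_mul_of_nonneg_right hfac1 hprod0
        _ = ∏ n ∈ range M, af q n := one_mul _
        _ ≤ π / 2 := le_trans hprodW hWle
    linarith
end

section
/- For every real z with |z| < 1/4, one has 1/cos(2πz) = exp( ∑_{k=1}^∞ (ζ^odd(2k)/k) (4z)^{2k} ), where the series on the right converges; equivalently, log cos(2πz) = − ∑_{k=1}^∞ (ζ^odd(2k)/k) (4z)^{2k}. -/
open Real Filter Finset

lemma prod_split (g : ℕ → ℝ) (N : ℕ) :
    ∏ j ∈ Finset.range (2 * N), g j = ∏ i ∈ Finset.range N, (g (2 * i) * g (2 * i + 1)) := by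
  induction N with
  | zero => simp
  | succ n ih =>
    rw [Nat.mul_succ, show 2 * n + 2 = (2 * n + 1) + 1 from rfl, Finset.prod_range_succ,
      Finset.prod_range_succ, ih, Finset.prod_range_succ]
    ring

lemma cos_prod (z : ℝ) (hz : |z| < 1 / 4) :
    Filter.Tendsto (fun N : ℕ => ∏ i ∈ Finset.range N, (1 - (4 * z) ^ 2 / (2 * (i : ℝ) + 1) ^ 2))
      Filter.atTop (nhds (Real.cos (2 * π * z))) := by
  rcases eq_or_ne z 0 with rfl | hz0
  · simpa using (tendsto_const_nhds : Filter.Tendsto (fun _ : ℕ => (1:ℝ)) _ _)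
  · set w : ℝ := 2 * z with hw
    have hw2 : w ^ 2 < 1 / 4 := by
      have : |w| < 1 / 2 := by rw [hw, abs_mul]; simp only [abs_two]; nlinarith [abs_nonneg z]
      nlinarith [abs_nonneg w, sq_abs w]
    have hw0 : w ≠ 0 := by simp [hw, hz0]
    have hsin : Real.sin (π * w) ≠ 0 := by
      rcases lt_or_gt_of_ne hw0 with h | h
      · have : Real.sin (π * (-w)) > 0 := by
          apply Real.sin_pos_of_pos_of_lt_pi
          · nlinarith [Real.pi_pos]
          · nlinarith [Real.pi_pos, hw2, abs_lt.mp (show |w| < 1/2 by nlinarith [sq_abs w, abs_nonneg w])]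
        rw [mul_neg, Real.sin_neg] at this
        linarith
      · have : Real.sin (π * w) > 0 := by
          apply Real.sin_pos_of_pos_of_lt_pi
          · nlinarith [Real.pi_pos]
          · nlinarith [Real.pi_pos, abs_lt.mp (show |w| < 1/2 by nlinarith [sq_abs w, abs_nonneg w])]
        linarith
    have hfac : ∀ j : ℕ, (0:ℝ) < 1 - w ^ 2 / ((j:ℝ) + 1) ^ 2 := by
      intro j
      have h1 : (1:ℝ) ≤ ((j:ℝ) + 1) ^ 2 := by nlinarith [Nat.cast_nonneg (α := ℝ) j]
      have h2 : w ^ 2 / ((j:ℝ) + 1) ^ 2 ≤ w ^ 2 := div_le_self (sq_nonneg w) h1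
      linarith
    have hsin' : Real.sin (2 * π * z) ≠ 0 := by
      rwa [show π * w = 2 * π * z by rw [hw]; ring] at hsin
    have hBpos : ∀ N : ℕ, (0:ℝ) < ∏ j ∈ Finset.range N, (1 - w ^ 2 / ((j:ℝ) + 1) ^ 2) :=
      fun N => Finset.prod_pos fun j _ => hfac j
    have hg : Filter.Tendsto (fun N : ℕ => 2 * N) Filter.atTop Filter.atTop :=
      Filter.tendsto_atTop_mono (fun n => by simp only [id_eq]; omega) Filter.tendsto_id
    have h3 : Filter.Tendsto
        (fun N : ℕ => (π * (2 * w) * ∏ j ∈ Finset.range (2 * N), (1 - (2 * w) ^ 2 / ((j:ℝ) + 1) ^ 2)) /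
          (2 * (π * w * ∏ j ∈ Finset.range N, (1 - w ^ 2 / ((j:ℝ) + 1) ^ 2))))
        Filter.atTop (nhds (Real.sin (π * (2 * w)) / (2 * Real.sin (π * w)))) := by
      exact Filter.Tendsto.div ((Real.tendsto_euler_sin_prod (2 * w)).comp hg)
        ((Real.tendsto_euler_sin_prod w).const_mul 2) (mul_ne_zero two_ne_zero hsin)
    have hval : Real.sin (π * (2 * w)) / (2 * Real.sin (π * w)) = Real.cos (2 * π * z) := by
      rw [show π * (2 * w) = 2 * (π * w) by ring, Real.sin_two_mul,
        show π * w = 2 * π * z by rw [hw]; ring]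
      field_simp
    have key : ∀ N : ℕ,
        (π * (2 * w) * ∏ j ∈ Finset.range (2 * N), (1 - (2 * w) ^ 2 / ((j:ℝ) + 1) ^ 2)) /
          (2 * (π * w * ∏ j ∈ Finset.range N, (1 - w ^ 2 / ((j:ℝ) + 1) ^ 2)))
        = ∏ i ∈ Finset.range N, (1 - (4 * z) ^ 2 / (2 * (i : ℝ) + 1) ^ 2) := by
      intro N
      have hsplit : (∏ j ∈ Finset.range (2 * N), (1 - (2 * w) ^ 2 / ((j:ℝ) + 1) ^ 2)) =
          (∏ i ∈ Finset.range N, (1 - (4 * z) ^ 2 / (2 * (i : ℝ) + 1) ^ 2)) *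
            ∏ j ∈ Finset.range N, (1 - w ^ 2 / ((j:ℝ) + 1) ^ 2) := by
        rw [prod_split (fun j => 1 - (2 * w) ^ 2 / ((j:ℝ) + 1) ^ 2) N, Finset.prod_mul_distrib]
        congr 1
        · refine Finset.prod_congr rfl fun i _ => ?_
          push_cast
          rw [hw]
          ring_nf
        · refine Finset.prod_congr rfl fun i _ => ?_
          push_cast
          have h1 : (2 * (i:ℝ) + 1 + 1) ≠ 0 := by positivity
          have h2 : ((i:ℝ) + 1) ≠ 0 := by positivity
          field_simp
          ring
      rw [hsplit]
      have hc : (2 * (π * w * ∏ j ∈ Finset.range N, (1 - w ^ 2 / ((j:ℝ) + 1) ^ 2))) ≠ 0 :=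
        mul_ne_zero two_ne_zero (mul_ne_zero (mul_ne_zero Real.pi_ne_zero hw0) (hBpos N).ne')
      rw [div_eq_iff hc]
      ring
    rw [show Real.cos (2 * π * z) = Real.sin (π * (2 * w)) / (2 * Real.sin (π * w)) from hval.symm]
    exact h3.congr key

theorem stmt17 (z : ℝ) (hz : |z| < 1 / 4) :
    Summable (fun k : ℕ =>
      (∑' m : ℕ, 1 / ((2 * (m : ℝ) + 1)) ^ (2 * (k + 1))) / (k + 1) *
        (4 * z) ^ (2 * (k + 1))) ∧
    1 / Real.cos (2 * π * z) =
      Real.exp (∑' k : ℕ,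
        (∑' m : ℕ, 1 / ((2 * (m : ℝ) + 1)) ^ (2 * (k + 1))) / (k + 1) *
          (4 * z) ^ (2 * (k + 1))) ∧
    Real.log (Real.cos (2 * π * z)) =
      -∑' k : ℕ,
        (∑' m : ℕ, 1 / ((2 * (m : ℝ) + 1)) ^ (2 * (k + 1))) / (k + 1) *
          (4 * z) ^ (2 * (k + 1)) := by
  obtain ⟨hz1, hz2⟩ := abs_lt.mp hz
  have hcos : 0 < Real.cos (2 * π * z) := by
    apply Real.cos_pos_of_mem_Ioo
    constructor
    · nlinarith [Real.pi_pos]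
    · nlinarith [Real.pi_pos]
  have hx2 : (4 * z) ^ 2 < 1 := by nlinarith
  have hc1 : ∀ n : ℕ, (1:ℝ) ≤ (2 * (n:ℝ) + 1) ^ 2 := by
    intro n; nlinarith [Nat.cast_nonneg (α := ℝ) n]
  -- the double-indexed term
  set T : ℕ → ℕ → ℝ := fun k n =>
    ((4 * z) ^ 2) ^ (k + 1) / (((k:ℝ) + 1) * ((2 * (n:ℝ) + 1) ^ 2) ^ (k + 1)) with hT_def
  have hTnonneg : ∀ k n, 0 ≤ T k n := by
    intro k n
    have h := hc1 n
    rw [hT_def]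
    positivity
  set a : ℕ → ℝ := fun n => (4 * z) ^ 2 / (2 * (n:ℝ) + 1) ^ 2 with ha_def
  have ha0 : ∀ n, 0 ≤ a n := fun n => by rw [ha_def]; positivity
  have ha1 : ∀ n, a n < 1 := by
    intro n
    have := div_le_self (sq_nonneg (4 * z)) (hc1 n)
    rw [ha_def]
    simpa using lt_of_le_of_lt this hx2
  -- inner sums
  have hk : ∀ n : ℕ, HasSum (fun k => T k n) (-Real.log (1 - a n)) := by
    intro n
    have h := hasSum_pow_div_log_of_abs_lt_one (x := a n)
      (by rw [abs_of_nonneg (ha0 n)]; exact ha1 n)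
    have heq : (fun k : ℕ => a n ^ (k + 1) / ((k:ℝ) + 1)) = fun k => T k n := by
      funext k
      rw [hT_def, ha_def]
      simp only
      rw [div_pow, div_div]
      ring
    rwa [heq] at h
  have hTn : ∀ n, Summable fun k => T k n := fun n => (hk n).summable
  -- geometric bound
  have hgeo : Summable (fun k : ℕ => ((4 * z) ^ 2) ^ (k + 1)) := by
    refine ((summable_geometric_of_lt_one (by positivity) hx2).mul_left ((4 * z) ^ 2)).congr ?_
    intro k
    rw [← pow_succ']
  have hTbound : ∀ n k, T k n ≤ ((4 * z) ^ 2) ^ (k + 1) / (2 * (n:ℝ) + 1) ^ 2 := by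
    intro n k
    rw [hT_def]
    simp only
    apply div_le_div_of_nonneg_left (by positivity) (by nlinarith [hc1 n])
    calc (2 * (n:ℝ) + 1) ^ 2 ≤ ((2 * (n:ℝ) + 1) ^ 2) ^ (k + 1) :=
          le_self_pow₀ (hc1 n) (Nat.succ_ne_zero k)
      _ ≤ ((k:ℝ) + 1) * ((2 * (n:ℝ) + 1) ^ 2) ^ (k + 1) := by
          apply le_mul_of_one_le_left (by positivity)
          have : (0:ℝ) ≤ (k:ℝ) := Nat.cast_nonneg k
          linarith
  have hsummable_inv : Summable (fun n : ℕ => 1 / (2 * (n:ℝ) + 1) ^ 2) := by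
    have h1 : Summable (fun n : ℕ => 1 / ((n:ℝ) + 1) ^ 2) := by
      have := (summable_nat_add_iff 1).mpr (summable_one_div_nat_pow.mpr (le_refl 2))
      exact this.congr fun n => by push_cast; ring
    apply h1.of_nonneg_of_le (fun n => by positivity)
    intro n
    apply div_le_div_of_nonneg_left (by norm_num) (by positivity)
    nlinarith [Nat.cast_nonneg (α := ℝ) n]
  have hsum2 : Summable fun n => ∑' k, T k n := by
    have hb : Summable (fun n : ℕ =>
        (∑' k : ℕ, ((4 * z) ^ 2) ^ (k + 1)) * (1 / (2 * (n:ℝ) + 1) ^ 2)) :=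
      hsummable_inv.mul_left _
    apply hb.of_nonneg_of_le (fun n => tsum_nonneg fun k => hTnonneg k n)
    intro n
    calc ∑' k, T k n ≤ ∑' k, ((4 * z) ^ 2) ^ (k + 1) / (2 * (n:ℝ) + 1) ^ 2 :=
          Summable.tsum_le_tsum (hTbound n) (hTn n) (hgeo.div_const _)
      _ = (∑' k : ℕ, ((4 * z) ^ 2) ^ (k + 1)) * (1 / (2 * (n:ℝ) + 1) ^ 2) := by
          rw [tsum_div_const]; ring
  -- Fubini
  have hTswap : Summable fun p : ℕ × ℕ => T p.2 p.1 :=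
    (summable_prod_of_nonneg fun p => hTnonneg p.2 p.1).mpr ⟨fun n => hTn n, hsum2⟩
  have hTprod : Summable fun p : ℕ × ℕ => T p.1 p.2 := hTswap.prod_symm
  have houter : Summable fun k => ∑' n, T k n :=
    ((summable_prod_of_nonneg fun p => hTnonneg p.1 p.2).mp hTprod).2
  have hfib : ∀ k, Summable fun n => T k n :=
    ((summable_prod_of_nonneg fun p => hTnonneg p.1 p.2).mp hTprod).1
  have hunc : Summable (Function.uncurry T) := hTprod
  have hcomm : ∑' k, ∑' n, T k n = ∑' n, ∑' k, T k n :=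
    (Summable.tsum_comm' (f := T) hunc hfib hTn).symm
  -- identify statement terms
  have hterm_eq : ∀ k : ℕ,
      (∑' m : ℕ, 1 / ((2 * (m : ℝ) + 1)) ^ (2 * (k + 1))) / (k + 1) * (4 * z) ^ (2 * (k + 1))
        = ∑' n, T k n := by
    intro k
    rw [← tsum_div_const, ← tsum_mul_right]
    refine tsum_congr fun n => ?_
    rw [hT_def]
    simp only
    rw [← pow_mul, ← pow_mul]
    have h1 : ((k:ℝ) + 1) ≠ 0 := by positivity
    have h2 : ((2 * (n:ℝ) + 1)) ^ (2 * (k + 1)) ≠ 0 := by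
      apply pow_ne_zero
      have := Nat.cast_nonneg (α := ℝ) n
      positivity
    field_simp
  -- the statement's summable claim
  have hstmt_summable : Summable (fun k : ℕ =>
      (∑' m : ℕ, 1 / ((2 * (m : ℝ) + 1)) ^ (2 * (k + 1))) / (k + 1) *
        (4 * z) ^ (2 * (k + 1))) := houter.congr fun k => (hterm_eq k).symm
  -- product → log sum
  have hfacpos : ∀ n : ℕ, (0:ℝ) < 1 - a n := fun n => by linarith [ha1 n]
  have hlogsummable : Summable fun n => Real.log (1 - a n) := by
    refine hsum2.neg.congr fun n => ?_
    rw [(hk n).tsum_eq]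
    ring
  have hlogsum : ∑' n, Real.log (1 - a n) = Real.log (Real.cos (2 * π * z)) := by
    refine tendsto_nhds_unique hlogsummable.hasSum.tendsto_sum_nat ?_
    have h6 : Filter.Tendsto (fun N : ℕ => Real.log (∏ i ∈ Finset.range N, (1 - a i)))
        Filter.atTop (nhds (Real.log (Real.cos (2 * π * z)))) :=
      ((Real.continuousAt_log hcos.ne').tendsto).comp (cos_prod z hz)
    refine h6.congr fun N => ?_
    rw [Real.log_prod fun i _ => (hfacpos i).ne']
  -- main identity
  have hmain : Real.log (Real.cos (2 * π * z)) =
      -∑' k : ℕ,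
        (∑' m : ℕ, 1 / ((2 * (m : ℝ) + 1)) ^ (2 * (k + 1))) / (k + 1) *
          (4 * z) ^ (2 * (k + 1)) := by
    rw [tsum_congr hterm_eq, hcomm, ← hlogsum, ← tsum_neg]
    refine tsum_congr fun n => ?_
    rw [(hk n).tsum_eq]
    ring
  have h9 : (∑' k : ℕ,
      (∑' m : ℕ, 1 / ((2 * (m : ℝ) + 1)) ^ (2 * (k + 1))) / (k + 1) *
        (4 * z) ^ (2 * (k + 1))) = -Real.log (Real.cos (2 * π * z)) := by
    rw [hmain, neg_neg]
  refine ⟨hstmt_summable, ?_, hmain⟩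
  rw [h9, Real.exp_neg, Real.exp_log hcos, one_div]
end

section
/- For every positive integer k, the rescaled odd q-zeta value satisfies lim_{q→1⁻} (1−q)^{2k} ζ_q^odd(2k) = ζ^odd(2k), where ζ^odd(2k) = ∑_{m odd, m ≥ 1} m^{−2k}. -/
open scoped BigOperators Topology

theorem stmt18 (k : ℕ) (hk : 0 < k) :
    Filter.Tendsto (fun q : ℝ => (1 - q) ^ (2 * k) * qZetaOdd q k) (𝓝[<] (1 : ℝ))
      (𝓝 (∑' m : ℕ, 1 / (2 * (m : ℝ) + 1) ^ (2 * k))) := by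
  have hcongr : (fun q : ℝ => (1 - q) ^ (2 * k) * qZetaOdd q k)
      = fun q : ℝ => ∑' n : ℕ,
        (1 - q) ^ (2 * k) * (q ^ ((2 * n + 1) * k) / (1 - q ^ (2 * n + 1)) ^ (2 * k)) := by
    funext q
    rw [qZetaOdd, tsum_mul_left]
  rw [hcongr]
  apply tendsto_tsum_of_dominated_convergence
    (bound := fun n : ℕ => 1 / ((n : ℝ) + 1) ^ (2 * k))
  · -- summability of the bound
    have h1 : Summable (fun n : ℕ => 1 / (n : ℝ) ^ (2 * k)) :=
      Real.summable_one_div_nat_pow.mpr (by omega)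
    have h2 := h1.comp_injective Nat.succ_injective
    apply h2.congr
    intro n
    simp [Function.comp, Nat.succ_eq_add_one]
  · -- pointwise convergence
    intro n
    set m : ℕ := 2 * n + 1 with hm
    -- the continuous surrogate
    set g : ℝ → ℝ := fun q => q ^ (m * k) / (∑ i ∈ Finset.range m, q ^ i) ^ (2 * k) with hg
    have hsum1 : (∑ i ∈ Finset.range m, (1 : ℝ) ^ i) = (m : ℝ) := by
      simp
    have hg1 : g 1 = 1 / (2 * (n : ℝ) + 1) ^ (2 * k) := by
      rw [hg]
      simp only [one_pow, hsum1]
      norm_num [hm]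
    have hcont : Filter.Tendsto g (𝓝[<] (1 : ℝ)) (𝓝 (g 1)) := by
      apply (ContinuousAt.continuousWithinAt ?_)
      apply ContinuousAt.div
      · fun_prop
      · fun_prop
      · rw [hsum1]
        positivity
    rw [hg1] at hcont
    apply hcont.congr'
    filter_upwards [self_mem_nhdsWithin] with q (hq : q < 1)
    -- for q < 1, g q equals the original term
    have hqm : q ^ m < 1 := by
      have hodd : Odd m := ⟨n, by omega⟩
      calc q ^ m < 1 ^ m := hodd.strictMono_pow hq
        _ = 1 := one_pow m
    have hqm' : (1 : ℝ) - q ^ m ≠ 0 := by linarith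
    have hfac : (1 - q) * (∑ i ∈ Finset.range m, q ^ i) = 1 - q ^ m := by
      linear_combination -geom_sum_mul q m
    have hq1 : (1 : ℝ) - q ≠ 0 := by linarith
    have hS : (∑ i ∈ Finset.range m, q ^ i) ≠ 0 := by
      intro h
      rw [h, mul_zero] at hfac
      exact hqm' hfac.symm
    rw [hg]
    rw [show (1 : ℝ) - q ^ m = (1 - q) * (∑ i ∈ Finset.range m, q ^ i) from hfac.symm]
    field_simp
    rw [mul_pow]
    ring
  · -- the domination bound
    filter_upwards [Ioo_mem_nhdsLT_of_mem (by constructor <;> norm_num :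
        (1 : ℝ) ∈ Set.Ioc (0 : ℝ) 1)] with q hq
    obtain ⟨hq0, hq1⟩ := hq
    intro n
    set m : ℕ := 2 * n + 1 with hm
    have hq0' : (0 : ℝ) ≤ q := le_of_lt hq0
    have hqm : q ^ m < 1 := pow_lt_one₀ hq0' hq1 (by omega)
    have hB : (0 : ℝ) < 1 - q ^ m := by linarith
    have hfac : (1 - q) * (∑ i ∈ Finset.range m, q ^ i) = 1 - q ^ m := by
      linear_combination -geom_sum_mul q m
    -- key inequality : (n+1) * q^n ≤ ∑_{i<m} q^i
    have hkey : ((n : ℝ) + 1) * q ^ n ≤ ∑ i ∈ Finset.range m, q ^ i := by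
      have h1 : ((n : ℝ) + 1) * q ^ n ≤ ∑ i ∈ Finset.range (n + 1), q ^ i := by
        have := Finset.card_nsmul_le_sum (Finset.range (n + 1)) (fun i => q ^ i) (q ^ n)
          (fun i hi => by
            apply pow_le_pow_of_le_one hq0' (le_of_lt hq1)
            have := Finset.mem_range.mp hi
            omega)
        simpa [nsmul_eq_mul, add_comm] using this
      have h2 : ∑ i ∈ Finset.range (n + 1), q ^ i ≤ ∑ i ∈ Finset.range m, q ^ i := by
        apply Finset.sum_le_sum_of_subset_of_nonneg
        · apply Finset.range_subset_range.mpr; omega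
        · intro i _ _; positivity
      linarith
    have hkey2 : ((n : ℝ) + 1) * q ^ n * (1 - q) ≤ 1 - q ^ m := by
      calc ((n : ℝ) + 1) * q ^ n * (1 - q)
          ≤ (∑ i ∈ Finset.range m, q ^ i) * (1 - q) := by
            apply mul_le_mul_of_nonneg_right hkey (by linarith)
        _ = 1 - q ^ m := by linear_combination -geom_sum_mul q m
    -- now conclude
    have hterm_nonneg : (0 : ℝ) ≤ (1 - q) ^ (2 * k) * (q ^ (m * k) / (1 - q ^ m) ^ (2 * k)) :=
      mul_nonneg (pow_nonneg (by linarith) _)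
        (div_nonneg (pow_nonneg hq0' _) (pow_nonneg hB.le _))
    rw [Real.norm_eq_abs, abs_of_nonneg hterm_nonneg, ← mul_div_assoc,
      div_le_div_iff₀ (pow_pos hB _) (by positivity), one_mul, mul_comm]
    calc ((n : ℝ) + 1) ^ (2 * k) * ((1 - q) ^ (2 * k) * (q ^ (m * k)))
        ≤ ((n : ℝ) + 1) ^ (2 * k) * ((1 - q) ^ (2 * k) * (q ^ n) ^ (2 * k)) := by
          apply mul_le_mul_of_nonneg_left _ (by positivity)
          apply mul_le_mul_of_nonneg_left _ (pow_nonneg (by linarith) _)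
          rw [← pow_mul]
          apply pow_le_pow_of_le_one hq0' (le_of_lt hq1)
          calc n * (2 * k) = 2 * n * k := by ring
            _ ≤ (2 * n + 1) * k := Nat.mul_le_mul_right k (by omega)
            _ = m * k := by rw [hm]
      _ = (((n : ℝ) + 1) * q ^ n * (1 - q)) ^ (2 * k) := by
          rw [mul_pow, mul_pow]; ring
      _ ≤ (1 - q ^ m) ^ (2 * k) := pow_le_pow_left₀
          (mul_nonneg (mul_nonneg (by positivity) (pow_nonneg hq0' _)) (by linarith)) hkey2 _
end
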